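/- arXiv:1007.5032 — 9 statements merged into one kernel-verified Lean document; each statement's English description precedes it below -/
import Mathlib

section
/- Suppose G has inductive independence number at most ρ ≥ 1 with respect to the ordering π, and let x be a fractional LP solution of value b*. Then there exists a feasible allocation S with b(S) ≥ b*/(8·√k·ρ). (This is the existence form of the guarantee of the randomized LP-rounding algorithm, which outputs such an allocation in expectation.) -/
open Finset

/-- Backward neighborhood of `v` w.r.t. the ordering `π`. -/
def BackNbhd {n : ℕ} (G : SimpleGraph (Fin n)) [DecidableRel G.Adj]
    (π : Equiv.Perm (Fin n)) (v : Fin n) : Finset (Fin n) :=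
  univ.filter fun u => G.Adj u v ∧ π u < π v

/-- `M` is an independent set of `G`. -/
def IsIndepSet {n : ℕ} (G : SimpleGraph (Fin n)) (M : Finset (Fin n)) : Prop :=
  ∀ u ∈ M, ∀ u' ∈ M, u ≠ u' → ¬ G.Adj u u'

/-- `G` has inductive independence number at most `ρ` with respect to `π`. -/
def IndIndepAtMost {n : ℕ} (G : SimpleGraph (Fin n)) [DecidableRel G.Adj]
    (π : Equiv.Perm (Fin n)) (ρ : ℝ) : Prop :=
  ∀ (v : Fin n) (M : Finset (Fin n)), IsIndepSet G M →
    ((M ∩ BackNbhd G π v).card : ℝ) ≤ ρ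

/-- `x` is a fractional LP solution. -/
def IsLPSol {n k : ℕ} (G : SimpleGraph (Fin n)) [DecidableRel G.Adj]
    (π : Equiv.Perm (Fin n)) (ρ : ℝ) (x : Fin n → Finset (Fin k) → ℝ) : Prop :=
  (∀ v T, 0 ≤ x v T) ∧
  (∀ (v : Fin n) (j : Fin k),
      ∑ u ∈ BackNbhd G π v,
        ∑ T ∈ univ.filter (fun T : Finset (Fin k) => j ∈ T), x u T ≤ ρ) ∧
  (∀ v : Fin n, ∑ T : Finset (Fin k), x v T ≤ 1)

/-- `S` is a feasible allocation: for each channel `j`, the set of vertices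
assigned channel `j` is an independent set. -/
def FeasibleAlloc {n k : ℕ} (G : SimpleGraph (Fin n)) (S : Fin n → Finset (Fin k)) : Prop :=
  ∀ (j : Fin k) (u v : Fin n), u ≠ v → j ∈ S u → j ∈ S v → ¬ G.Adj u v

private lemma weier {ι : Type*} (s : Finset ι) (f : ι → ℝ)
    (h0 : ∀ i ∈ s, 0 ≤ f i) (h1 : ∀ i ∈ s, f i ≤ 1) :
    1 - ∑ i ∈ s, (1 - f i) ≤ ∏ i ∈ s, f i := by
  induction s using Finset.cons_induction with
  | empty => simp
  | cons a s ha ih =>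
    rw [Finset.prod_cons, Finset.sum_cons]
    have h0a := h0 a (Finset.mem_cons_self a s)
    have h1a := h1 a (Finset.mem_cons_self a s)
    have ih' := ih (fun i hi => h0 i (Finset.mem_cons_of_mem hi))
      (fun i hi => h1 i (Finset.mem_cons_of_mem hi))
    have hp : (0:ℝ) ≤ ∏ i ∈ s, f i :=
      Finset.prod_nonneg (fun i hi => h0 i (Finset.mem_cons_of_mem hi))
    have hs : (0:ℝ) ≤ ∑ i ∈ s, (1 - f i) := Finset.sum_nonneg (fun i hi => by
      have := h1 i (Finset.mem_cons_of_mem hi); linarith)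
    nlinarith [mul_le_mul_of_nonneg_left ih' h0a]

private lemma sum_prod_eq {n : ℕ} {κ : Type*} [Fintype κ] [DecidableEq κ]
    (g : Fin n → κ → ℝ) :
    ∑ ω : Fin n → κ, ∏ i, g i (ω i) = ∏ i, ∑ T : κ, g i T := by
  rw [Finset.prod_univ_sum, Fintype.piFinset_univ]

private lemma count_sum {k : ℕ} (J : Finset (Fin k)) (y : Finset (Fin k) → ℝ) :
    ∑ T' : Finset (Fin k), ((J.filter (· ∈ T')).card : ℝ) * y T'
      = ∑ j ∈ J, ∑ T' ∈ univ.filter (fun T' => j ∈ T'), y T' := by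
  have h1 : ∀ T' : Finset (Fin k),
      ((J.filter (· ∈ T')).card : ℝ) * y T' = ∑ j ∈ J, (if j ∈ T' then y T' else 0) := by
    intro T'
    rw [← Finset.sum_filter, Finset.sum_const, nsmul_eq_mul]
  simp only [h1]
  rw [Finset.sum_comm]
  exact Finset.sum_congr rfl fun j _ => (Finset.sum_filter _ _).symm

private theorem aux_round {n k : ℕ} (hk : 1 ≤ k)
    (G : SimpleGraph (Fin n)) [DecidableRel G.Adj]
    (π : Equiv.Perm (Fin n)) (ρ : ℝ) (hρ : 1 ≤ ρ)
    (b : Fin n → Finset (Fin k) → ℝ) (hb : ∀ v T, 0 ≤ b v T)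
    (hb0 : ∀ v, b v ∅ = 0)
    (x : Fin n → Finset (Fin k) → ℝ)
    (hx0 : ∀ v T, 0 ≤ x v T)
    (hx2 : ∀ v : Fin n, ∑ T : Finset (Fin k), x v T ≤ 1)
    (C : Finset (Finset (Fin k))) (hCne : (∅ : Finset (Fin k)) ∉ C)
    (hC : ∀ (v : Fin n) (T : Finset (Fin k)), T ∈ C →
      ∑ u ∈ BackNbhd G π v, ∑ T' ∈ C.filter (fun T' => ¬ Disjoint T' T), x u T'
        ≤ Real.sqrt k * ρ) :
    ∃ S : Fin n → Finset (Fin k), FeasibleAlloc G S ∧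
      (∑ v : Fin n, ∑ T ∈ C, b v T * x v T) / (4 * Real.sqrt k * ρ)
        ≤ ∑ v : Fin n, b v (S v) := by
  classical
  set sk := Real.sqrt k with hskdef
  have hsk1 : 1 ≤ sk := by
    rw [hskdef, show (1:ℝ) = Real.sqrt 1 by simp]
    exact Real.sqrt_le_sqrt (by exact_mod_cast hk)
  have hskρ : 0 < sk * ρ := by nlinarith
  set q : ℝ := 1 / (2 * sk * ρ) with hqdef
  have hq0 : 0 < q := by rw [hqdef]; positivity
  have hq1 : q ≤ 1 := by rw [hqdef, div_le_one (by nlinarith)]; nlinarith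
  set p : Fin n → Finset (Fin k) → ℝ := fun v T =>
    if T = ∅ then 1 - q * ∑ T' ∈ C, x v T' else if T ∈ C then q * x v T else 0 with hpdef
  have hxCle : ∀ v, ∑ T' ∈ C, x v T' ≤ 1 := fun v =>
    le_trans (Finset.sum_le_sum_of_subset_of_nonneg (Finset.subset_univ C)
      (fun T _ _ => hx0 v T)) (hx2 v)
  have hxC0 : ∀ v, 0 ≤ ∑ T' ∈ C, x v T' := fun v => Finset.sum_nonneg fun T _ => hx0 v T
  have hp0 : ∀ v T, 0 ≤ p v T := by
    intro v T
    simp only [hpdef]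
    split_ifs with h1 h2
    · nlinarith [hxCle v, hxC0 v]
    · exact mul_nonneg hq0.le (hx0 v T)
    · exact le_refl 0
  have hpC : ∀ v T, T ∈ C → p v T = q * x v T := by
    intro v T hT
    simp only [hpdef]
    rw [if_neg (by rintro rfl; exact hCne hT), if_pos hT]
  have hpne : ∀ v T, T ≠ ∅ → p v T = if T ∈ C then q * x v T else 0 := by
    intro v T hT
    simp only [hpdef]
    rw [if_neg hT]
  have hpsum : ∀ v, ∑ T : Finset (Fin k), p v T = 1 := by
    intro v
    rw [← Finset.add_sum_erase _ _ (Finset.mem_univ (∅ : Finset (Fin k)))]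
    have h2 : ∑ T ∈ (univ : Finset (Finset (Fin k))).erase ∅, p v T
        = ∑ T ∈ C, q * x v T := by
      rw [Finset.sum_congr rfl (fun T hT => hpne v T (Finset.ne_of_mem_erase hT)),
        Finset.sum_ite_mem]
      congr 1
      rw [Finset.inter_eq_right]
      intro T hT
      exact Finset.mem_erase.2 ⟨by rintro rfl; exact hCne hT, Finset.mem_univ _⟩
    rw [h2, ← Finset.mul_sum]
    have h3 : p v ∅ = 1 - q * ∑ T' ∈ C, x v T' := by simp [hpdef]
    rw [h3]; ring
  -- tentative sets are kept iff disjoint from all backward neighbors' tentative sets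
  set keep : (Fin n → Finset (Fin k)) → Fin n → Prop :=
    fun ω v => ∀ u ∈ BackNbhd G π v, Disjoint (ω u) (ω v) with hkeepdef
  set Sa : (Fin n → Finset (Fin k)) → Fin n → Finset (Fin k) :=
    fun ω v => if keep ω v then ω v else ∅ with hSadef
  have hvB : ∀ v, v ∉ BackNbhd G π v := by
    intro v hv
    rw [BackNbhd, Finset.mem_filter] at hv
    exact G.irrefl hv.2.1
  have hfeas : ∀ ω, FeasibleAlloc G (Sa ω) := by
    intro ω j u v huv hju hjv hadj
    have hku : keep ω u := by
      by_contra h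
      simp only [hSadef, if_neg h] at hju
      exact absurd hju (Finset.notMem_empty j)
    have hkv : keep ω v := by
      by_contra h
      simp only [hSadef, if_neg h] at hjv
      exact absurd hjv (Finset.notMem_empty j)
    simp only [hSadef, if_pos hku] at hju
    simp only [hSadef, if_pos hkv] at hjv
    simp only [hkeepdef] at hku hkv
    rcases lt_or_gt_of_ne (fun h : π u = π v => huv (π.injective h)) with h | h
    · have huB : u ∈ BackNbhd G π v := by
        rw [BackNbhd, Finset.mem_filter]; exact ⟨Finset.mem_univ _, hadj, h⟩
      exact (Finset.disjoint_left.1 (hkv u huB) hju) hjv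
    · have hvB' : v ∈ BackNbhd G π u := by
        rw [BackNbhd, Finset.mem_filter]; exact ⟨Finset.mem_univ _, hadj.symm, h⟩
      exact (Finset.disjoint_left.1 (hku v hvB') hjv) hju
  set w : (Fin n → Finset (Fin k)) → ℝ := fun ω => ∏ i, p i (ω i) with hwdef
  have hw0 : ∀ ω, 0 ≤ w ω := fun ω => Finset.prod_nonneg fun i _ => hp0 i (ω i)
  have hwsum : ∑ ω : Fin n → Finset (Fin k), w ω = 1 := by
    simp only [hwdef]
    rw [sum_prod_eq]
    simp only [hpsum]
    exact Finset.prod_const_one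
  set sd : Fin n → Finset (Fin k) → ℝ :=
    fun u T => ∑ T' ∈ univ.filter (fun T' => Disjoint T' T), p u T' with hsddef
  have hsd0 : ∀ u T, 0 ≤ sd u T := fun u T => Finset.sum_nonneg fun T' _ => hp0 u T'
  have hsdle : ∀ u T, sd u T ≤ 1 := by
    intro u T
    rw [← hpsum u]
    simp only [hsddef]
    exact Finset.sum_le_sum_of_subset_of_nonneg (Finset.filter_subset _ _)
      fun T' _ _ => hp0 u T'
  have hfac : ∀ (v : Fin n) (T : Finset (Fin k)),
      (∑ ω : Fin n → Finset (Fin k), w ω * (if ω v = T ∧ keep ω v then (1:ℝ) else 0))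
        = p v T * ∏ u ∈ BackNbhd G π v, sd u T := by
    intro v T
    set g : Fin n → Finset (Fin k) → ℝ := fun i T' =>
      p i T' * (if i = v then (if T' = T then (1:ℝ) else 0)
        else if i ∈ BackNbhd G π v then (if Disjoint T' T then (1:ℝ) else 0) else 1) with hgdef
    have hpt : ∀ ω : Fin n → Finset (Fin k),
        w ω * (if ω v = T ∧ keep ω v then (1:ℝ) else 0) = ∏ i, g i (ω i) := by
      intro ω
      by_cases h1 : ω v = T
      · by_cases h2 : keep ω v
        · rw [if_pos ⟨h1, h2⟩, mul_one]
          simp only [hwdef]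
          refine Finset.prod_congr rfl fun i _ => ?_
          simp only [hgdef]
          simp only [hkeepdef] at h2
          by_cases hiv : i = v
          · subst hiv; rw [if_pos rfl, if_pos h1, mul_one]
          · rw [if_neg hiv]
            by_cases hiB : i ∈ BackNbhd G π v
            · rw [if_pos hiB, if_pos (h1 ▸ h2 i hiB), mul_one]
            · rw [if_neg hiB, mul_one]
        · rw [if_neg (fun h => h2 h.2), mul_zero]
          simp only [hkeepdef] at h2
          push_neg at h2
          obtain ⟨u, huB, hud⟩ := h2
          refine (Finset.prod_eq_zero (Finset.mem_univ u) ?_).symm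
          simp only [hgdef]
          have huv' : u ≠ v := fun h => hvB v (h ▸ huB)
          rw [if_neg huv', if_pos huB, if_neg (h1 ▸ hud), mul_zero]
      · rw [if_neg (fun h => h1 h.1), mul_zero]
        refine (Finset.prod_eq_zero (Finset.mem_univ v) ?_).symm
        simp only [hgdef]
        simp [h1]
    rw [Finset.sum_congr rfl fun ω _ => hpt ω, sum_prod_eq]
    have hgv : ∑ T' : Finset (Fin k), g v T' = p v T := by
      simp [hgdef, mul_ite, Finset.sum_ite_eq']
    have hstep : ∀ i ∈ (univ : Finset (Fin n)).erase v, (∑ T' : Finset (Fin k), g i T')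
        = (if i ∈ BackNbhd G π v then sd i T else 1) := by
      intro i hi
      have hiv := Finset.ne_of_mem_erase hi
      by_cases hiB : i ∈ BackNbhd G π v
      · rw [if_pos hiB]
        simp only [hgdef, if_neg hiv, if_pos hiB, mul_ite, mul_one, mul_zero, hsddef]
        exact (Finset.sum_filter _ _).symm
      · rw [if_neg hiB]
        simp only [hgdef, if_neg hiv, if_neg hiB, mul_one]
        exact hpsum i
    rw [← Finset.mul_prod_erase univ _ (Finset.mem_univ v), hgv]
    congr 1
    rw [Finset.prod_congr rfl hstep, Finset.prod_ite_mem]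
    congr 1
    rw [Finset.inter_eq_right]
    intro u huB
    exact Finset.mem_erase.2 ⟨fun h => hvB v (h ▸ huB), Finset.mem_univ _⟩
  have hEv : ∀ v : Fin n,
      (∑ ω : Fin n → Finset (Fin k), w ω * b v (Sa ω v))
        = ∑ T : Finset (Fin k), b v T * (p v T * ∏ u ∈ BackNbhd G π v, sd u T) := by
    intro v
    have hpt : ∀ ω : Fin n → Finset (Fin k),
        w ω * b v (Sa ω v)
          = ∑ T : Finset (Fin k),
              b v T * (w ω * (if ω v = T ∧ keep ω v then (1:ℝ) else 0)) := by
      intro ω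
      by_cases h2 : keep ω v
      · have hS : Sa ω v = ω v := if_pos h2
        rw [hS]
        have hcond : ∀ T : Finset (Fin k), (ω v = T ∧ keep ω v) ↔ (ω v = T) :=
          fun T => ⟨fun h => h.1, fun h => ⟨h, h2⟩⟩
        simp only [mul_ite, mul_one, mul_zero, hcond]
        rw [Finset.sum_ite_eq, if_pos (Finset.mem_univ _)]
        ring
      · have hS : Sa ω v = ∅ := if_neg h2
        rw [hS, hb0 v, mul_zero]
        simp [h2]
    rw [Finset.sum_congr rfl fun ω _ => hpt ω, Finset.sum_comm]
    refine Finset.sum_congr rfl fun T _ => ?_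
    rw [← Finset.mul_sum, hfac v T]
  have hcomp : ∀ (u : Fin n) (T : Finset (Fin k)),
      1 - sd u T = q * ∑ T' ∈ C.filter (fun T' => ¬ Disjoint T' T), x u T' := by
    intro u T
    have hsplit := Finset.sum_filter_add_sum_filter_not (univ : Finset (Finset (Fin k)))
      (fun T' => Disjoint T' T) (p u)
    rw [hpsum u] at hsplit
    have h2 : ∑ T' ∈ univ.filter (fun T' => ¬ Disjoint T' T), p u T'
        = ∑ T' ∈ C.filter (fun T' => ¬ Disjoint T' T), q * x u T' := by
      have hstep : ∀ T' ∈ univ.filter (fun T' => ¬ Disjoint T' T),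
          p u T' = if T' ∈ C then q * x u T' else 0 := by
        intro T' hT'
        rw [Finset.mem_filter] at hT'
        refine hpne u T' ?_
        rintro rfl
        exact hT'.2 (Finset.disjoint_empty_left T)
      rw [Finset.sum_congr rfl hstep, Finset.sum_ite_mem]
      congr 1
      ext T'
      simp only [Finset.mem_inter, Finset.mem_filter, Finset.mem_univ, true_and]
      tauto
    simp only [hsddef]
    rw [Finset.mul_sum, ← h2]
    linarith [hsplit]
  have hsk0 : sk ≠ 0 := by nlinarith
  have hρ0 : ρ ≠ 0 := by nlinarith
  have hkey : ∀ (v : Fin n) (T : Finset (Fin k)), T ∈ C →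
      (1:ℝ)/2 ≤ ∏ u ∈ BackNbhd G π v, sd u T := by
    intro v T hT
    have hW := weier (BackNbhd G π v) (fun u => sd u T)
      (fun u _ => hsd0 u T) (fun u _ => hsdle u T)
    have h1 : ∑ u ∈ BackNbhd G π v, (1 - sd u T)
        = q * ∑ u ∈ BackNbhd G π v, ∑ T' ∈ C.filter (fun T' => ¬ Disjoint T' T), x u T' := by
      rw [Finset.mul_sum]
      exact Finset.sum_congr rfl fun u _ => hcomp u T
    have hq2 : q * (sk * ρ) = 1/2 := by
      rw [hqdef]; field_simp
    have hsum : ∑ u ∈ BackNbhd G π v, (1 - sd u T) ≤ 1/2 := by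
      rw [h1, ← hq2]
      exact mul_le_mul_of_nonneg_left (hC v T hT) hq0.le
    calc (1:ℝ)/2 = 1 - 1/2 := by ring
      _ ≤ 1 - ∑ u ∈ BackNbhd G π v, (1 - sd u T) := by linarith
      _ ≤ ∏ u ∈ BackNbhd G π v, sd u T := hW
  obtain ⟨ω0, -, hω0⟩ := Finset.exists_max_image (univ : Finset (Fin n → Finset (Fin k)))
    (fun ω => ∑ v : Fin n, b v (Sa ω v)) Finset.univ_nonempty
  refine ⟨Sa ω0, hfeas ω0, ?_⟩
  have hEle : (∑ ω : Fin n → Finset (Fin k), w ω * ∑ v : Fin n, b v (Sa ω v))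
      ≤ ∑ v : Fin n, b v (Sa ω0 v) := by
    calc ∑ ω : Fin n → Finset (Fin k), w ω * ∑ v : Fin n, b v (Sa ω v)
        ≤ ∑ ω : Fin n → Finset (Fin k), w ω * ∑ v : Fin n, b v (Sa ω0 v) :=
          Finset.sum_le_sum fun ω _ =>
            mul_le_mul_of_nonneg_left (hω0 ω (Finset.mem_univ ω)) (hw0 ω)
      _ = (∑ ω : Fin n → Finset (Fin k), w ω) * ∑ v : Fin n, b v (Sa ω0 v) :=
          (Finset.sum_mul _ _ _).symm
      _ = ∑ v : Fin n, b v (Sa ω0 v) := by rw [hwsum, one_mul]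
  have hEge : q/2 * (∑ v : Fin n, ∑ T ∈ C, b v T * x v T)
      ≤ ∑ ω : Fin n → Finset (Fin k), w ω * ∑ v : Fin n, b v (Sa ω v) := by
    have hswap : (∑ ω : Fin n → Finset (Fin k), w ω * ∑ v : Fin n, b v (Sa ω v))
        = ∑ v : Fin n, ∑ ω : Fin n → Finset (Fin k), w ω * b v (Sa ω v) := by
      simp only [Finset.mul_sum]
      exact Finset.sum_comm
    rw [hswap, Finset.mul_sum]
    refine Finset.sum_le_sum fun v _ => ?_
    rw [hEv v]
    calc q/2 * ∑ T ∈ C, b v T * x v T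
        = ∑ T ∈ C, b v T * (q * x v T * (1/2)) := by
          rw [Finset.mul_sum]
          exact Finset.sum_congr rfl fun T _ => by ring
      _ ≤ ∑ T ∈ C, b v T * (p v T * ∏ u ∈ BackNbhd G π v, sd u T) := by
          refine Finset.sum_le_sum fun T hT => ?_
          rw [hpC v T hT]
          refine mul_le_mul_of_nonneg_left ?_ (hb v T)
          exact mul_le_mul_of_nonneg_left (hkey v T hT)
            (mul_nonneg hq0.le (hx0 v T))
      _ ≤ ∑ T : Finset (Fin k), b v T * (p v T * ∏ u ∈ BackNbhd G π v, sd u T) :=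
          Finset.sum_le_sum_of_subset_of_nonneg (Finset.subset_univ C) fun T _ _ =>
            mul_nonneg (hb v T) (mul_nonneg (hp0 v T)
              (Finset.prod_nonneg fun u _ => hsd0 u T))
  have hfinal : (∑ v : Fin n, ∑ T ∈ C, b v T * x v T) / (4 * sk * ρ)
      = q/2 * (∑ v : Fin n, ∑ T ∈ C, b v T * x v T) := by
    have hq4 : q/2 = 1/(4*sk*ρ) := by
      rw [hqdef, div_div, show 2*sk*ρ*2 = 4*sk*ρ by ring]
    rw [hq4]
    ring
  rw [hfinal]
  exact le_trans hEge hEle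
/-- rounding guarantee for unweighted conflict graphs:
there is a feasible allocation with value at least `b* / (8 √k ρ)`. -/
theorem exists_feasible_alloc_of_lp_solution {n k : ℕ} (hk : 1 ≤ k)
    (G : SimpleGraph (Fin n)) [DecidableRel G.Adj]
    (π : Equiv.Perm (Fin n)) (ρ : ℝ) (hρ : 1 ≤ ρ)
    (hind : IndIndepAtMost G π ρ)
    (b : Fin n → Finset (Fin k) → ℝ) (hb : ∀ v T, 0 ≤ b v T)
    (hb0 : ∀ v, b v ∅ = 0)
    (x : Fin n → Finset (Fin k) → ℝ) (hx : IsLPSol G π ρ x) :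
    ∃ S : Fin n → Finset (Fin k), FeasibleAlloc G S ∧
      (∑ v : Fin n, ∑ T : Finset (Fin k), b v T * x v T) / (8 * Real.sqrt k * ρ)
        ≤ ∑ v : Fin n, b v (S v) := by
  classical
  obtain ⟨hx0, hx1, hx2⟩ := hx
  set sk := Real.sqrt k with hskdef
  have hk1 : (1:ℝ) ≤ (k:ℝ) := by exact_mod_cast hk
  have hsk1 : 1 ≤ sk := by
    rw [hskdef, show (1:ℝ) = Real.sqrt 1 by simp]
    exact Real.sqrt_le_sqrt hk1
  have hskpos : 0 < sk := by linarith
  have hsk2 : sk * sk = (k:ℝ) := Real.mul_self_sqrt (by positivity)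
  have hρ0 : (0:ℝ) ≤ ρ := by linarith
  have hskρ : 0 < sk * ρ := by nlinarith
  set Cs : Finset (Finset (Fin k)) :=
    univ.filter (fun T => T ≠ ∅ ∧ (T.card : ℝ) ≤ sk) with hCs
  set Cl : Finset (Finset (Fin k)) :=
    univ.filter (fun T => sk < (T.card : ℝ)) with hCl
  have hCsne : (∅ : Finset (Fin k)) ∉ Cs := by simp [hCs]
  have hClne : (∅ : Finset (Fin k)) ∉ Cl := by
    simp only [hCl, Finset.mem_filter, Finset.mem_univ, true_and, Finset.card_empty,
      Nat.cast_zero, not_lt]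
    linarith
  -- the small-sets bound
  have hCsmall : ∀ (v : Fin n) (T : Finset (Fin k)), T ∈ Cs →
      ∑ u ∈ BackNbhd G π v, ∑ T' ∈ Cs.filter (fun T' => ¬ Disjoint T' T), x u T'
        ≤ sk * ρ := by
    intro v T hT
    rw [hCs, Finset.mem_filter] at hT
    obtain ⟨-, hTne, hTcard⟩ := hT
    have hstep : ∀ u : Fin n, ∑ T' ∈ Cs.filter (fun T' => ¬ Disjoint T' T), x u T'
        ≤ ∑ j ∈ T, ∑ T' ∈ univ.filter (fun T' => j ∈ T'), x u T' := by
      intro u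
      rw [← count_sum T (x u)]
      calc ∑ T' ∈ Cs.filter (fun T' => ¬ Disjoint T' T), x u T'
          ≤ ∑ T' ∈ Cs.filter (fun T' => ¬ Disjoint T' T),
              ((T.filter (· ∈ T')).card : ℝ) * x u T' := by
            refine Finset.sum_le_sum fun T' hT' => ?_
            rw [Finset.mem_filter] at hT'
            obtain ⟨j, hj1, hj2⟩ := Finset.not_disjoint_iff.1 hT'.2
            have hcard : 1 ≤ (T.filter (· ∈ T')).card := by
              refine Finset.card_pos.2 ⟨j, ?_⟩
              rw [Finset.mem_filter]
              exact ⟨hj2, hj1⟩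
            have hcast : (1:ℝ) ≤ ((T.filter (· ∈ T')).card : ℝ) := by exact_mod_cast hcard
            exact le_mul_of_one_le_left (hx0 u T') hcast
        _ ≤ ∑ T' : Finset (Fin k), ((T.filter (· ∈ T')).card : ℝ) * x u T' :=
            Finset.sum_le_sum_of_subset_of_nonneg (Finset.subset_univ _)
              fun T' _ _ => mul_nonneg (by positivity) (hx0 u T')
    calc ∑ u ∈ BackNbhd G π v, ∑ T' ∈ Cs.filter (fun T' => ¬ Disjoint T' T), x u T'
        ≤ ∑ u ∈ BackNbhd G π v, ∑ j ∈ T,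
            ∑ T' ∈ univ.filter (fun T' => j ∈ T'), x u T' :=
          Finset.sum_le_sum fun u _ => hstep u
      _ = ∑ j ∈ T, ∑ u ∈ BackNbhd G π v,
            ∑ T' ∈ univ.filter (fun T' => j ∈ T'), x u T' := Finset.sum_comm
      _ ≤ ∑ _j ∈ T, ρ := Finset.sum_le_sum fun j _ => hx1 v j
      _ = (T.card : ℝ) * ρ := by rw [Finset.sum_const, nsmul_eq_mul]
      _ ≤ sk * ρ := mul_le_mul_of_nonneg_right hTcard hρ0
  -- the large-sets bound
  have hClarge : ∀ (v : Fin n) (T : Finset (Fin k)), T ∈ Cl →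
      ∑ u ∈ BackNbhd G π v, ∑ T' ∈ Cl.filter (fun T' => ¬ Disjoint T' T), x u T'
        ≤ sk * ρ := by
    intro v T _
    have hstep : ∀ u : Fin n, ∑ T' ∈ Cl.filter (fun T' => ¬ Disjoint T' T), x u T'
        ≤ (1/sk) * ∑ j : Fin k, ∑ T' ∈ univ.filter (fun T' => j ∈ T'), x u T' := by
      intro u
      have hcs : (∑ T' : Finset (Fin k), ((T'.card : ℝ)) * x u T')
          = ∑ j : Fin k, ∑ T' ∈ univ.filter (fun T' => j ∈ T'), x u T' := by
        have h := count_sum (univ : Finset (Fin k)) (x u)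
        simp only [Finset.filter_univ_mem] at h
        exact h
      rw [← hcs]
      calc ∑ T' ∈ Cl.filter (fun T' => ¬ Disjoint T' T), x u T'
          ≤ ∑ T' ∈ Cl.filter (fun T' => ¬ Disjoint T' T),
              (1/sk) * ((T'.card : ℝ) * x u T') := by
            refine Finset.sum_le_sum fun T' hT' => ?_
            rw [Finset.mem_filter, hCl, Finset.mem_filter] at hT'
            have hcard : sk ≤ (T'.card : ℝ) := le_of_lt hT'.1.2
            have h1 : (1:ℝ) ≤ 1/sk * (T'.card : ℝ) := by
              rw [one_div_mul_eq_div]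
              exact (one_le_div hskpos).2 hcard
            calc x u T' = 1 * x u T' := (one_mul _).symm
              _ ≤ (1/sk * (T'.card:ℝ)) * x u T' :=
                  mul_le_mul_of_nonneg_right h1 (hx0 u T')
              _ = 1/sk * ((T'.card:ℝ) * x u T') := by ring
        _ ≤ ∑ T' : Finset (Fin k), (1/sk) * ((T'.card : ℝ) * x u T') :=
            Finset.sum_le_sum_of_subset_of_nonneg (Finset.subset_univ _)
              fun T' _ _ => mul_nonneg (by positivity)
                (mul_nonneg (by positivity) (hx0 u T'))
        _ = (1/sk) * ∑ T' : Finset (Fin k), (T'.card : ℝ) * x u T' := by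
            rw [Finset.mul_sum]
    calc ∑ u ∈ BackNbhd G π v, ∑ T' ∈ Cl.filter (fun T' => ¬ Disjoint T' T), x u T'
        ≤ ∑ u ∈ BackNbhd G π v,
            (1/sk) * ∑ j : Fin k, ∑ T' ∈ univ.filter (fun T' => j ∈ T'), x u T' :=
          Finset.sum_le_sum fun u _ => hstep u
      _ = (1/sk) * ∑ j : Fin k, ∑ u ∈ BackNbhd G π v,
            ∑ T' ∈ univ.filter (fun T' => j ∈ T'), x u T' := by
          rw [← Finset.mul_sum]
          congr 1
          exact Finset.sum_comm
      _ ≤ (1/sk) * ∑ _j : Fin k, ρ := by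
          refine mul_le_mul_of_nonneg_left (Finset.sum_le_sum fun j _ => hx1 v j)
            (by positivity)
      _ = (1/sk) * ((k:ℝ) * ρ) := by
          rw [Finset.sum_const, Finset.card_univ, Fintype.card_fin, nsmul_eq_mul]
      _ = sk * ρ := by
          rw [← hsk2]
          field_simp
  -- partition of the LP value
  have hsplit : ∀ v : Fin n, ∑ T : Finset (Fin k), b v T * x v T
      = (∑ T ∈ Cs, b v T * x v T) + (∑ T ∈ Cl, b v T * x v T) := by
    intro v
    rw [← Finset.sum_filter_add_sum_filter_not univ
      (fun T : Finset (Fin k) => (T.card:ℝ) ≤ sk) (fun T => b v T * x v T)]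
    congr 1
    · have hfe : univ.filter (fun T : Finset (Fin k) => (T.card:ℝ) ≤ sk)
          = insert ∅ Cs := by
        ext T
        rw [Finset.mem_filter, Finset.mem_insert, hCs, Finset.mem_filter]
        simp only [Finset.mem_univ, true_and]
        constructor
        · intro h
          by_cases hT : T = ∅
          · exact Or.inl hT
          · exact Or.inr ⟨hT, h⟩
        · rintro (rfl | ⟨h1, h2⟩)
          · simp only [Finset.card_empty, Nat.cast_zero]
            linarith
          · exact h2
      rw [hfe, Finset.sum_insert hCsne, hb0 v, zero_mul, zero_add]
    · have hfe : univ.filter (fun T : Finset (Fin k) => ¬ (T.card:ℝ) ≤ sk) = Cl := by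
        ext T
        rw [Finset.mem_filter, hCl, Finset.mem_filter]
        simp [not_le]
      rw [hfe]
  have htot : (∑ v : Fin n, ∑ T : Finset (Fin k), b v T * x v T)
      = (∑ v : Fin n, ∑ T ∈ Cs, b v T * x v T)
        + (∑ v : Fin n, ∑ T ∈ Cl, b v T * x v T) := by
    rw [← Finset.sum_add_distrib]
    exact Finset.sum_congr rfl fun v _ => hsplit v
  have h4 : (0:ℝ) < 4 * sk * ρ := by nlinarith
  rcases le_total (∑ v : Fin n, ∑ T ∈ Cs, b v T * x v T)
      (∑ v : Fin n, ∑ T ∈ Cl, b v T * x v T) with hcase | hcase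
  · obtain ⟨S, hS1, hS2⟩ := aux_round hk G π ρ hρ b hb hb0 x hx0 hx2 Cl hClne hClarge
    rw [← hskdef] at hS2
    refine ⟨S, hS1, le_trans ?_ hS2⟩
    rw [htot, show (8:ℝ)*sk*ρ = 2*(4*sk*ρ) by ring, ← div_div]
    exact (div_le_div_iff_of_pos_right h4).2 (by linarith)
  · obtain ⟨S, hS1, hS2⟩ := aux_round hk G π ρ hρ b hb hb0 x hx0 hx2 Cs hCsne hCsmall
    rw [← hskdef] at hS2
    refine ⟨S, hS1, le_trans ?_ hS2⟩
    rw [htot, show (8:ℝ)*sk*ρ = 2*(4*sk*ρ) by ring, ← div_div]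
    exact (div_le_div_iff_of_pos_right h4).2 (by linarith)
end

section
/- Let x be a fractional LP solution such that x(u,T) = 0 for every u ∈ V and every nonempty T ⊆ [k] with |T| < √k. Then for every vertex v ∈ V, one has ∑_{u ∈ Γπ(v)} ∑_{T' ⊆ [k], T' ≠ ∅} x(u,T') ≤ √k·ρ. (This is the deterministic estimate underlying the bound of 1/2 on the conditional probability that a vertex surviving the rounding stage is removed in the conflict-resolution stage, in the case of bundles of size at least √k.) -/
open Finset

/-- deterministic estimate for bundles of size at least `√k`. -/
theorem large_bundle_conflict_estimate {n k : ℕ} (hk : 1 ≤ k)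
    (G : SimpleGraph (Fin n)) [DecidableRel G.Adj]
    (π : Equiv.Perm (Fin n)) (ρ : ℝ) (hρ : 1 ≤ ρ)
    (x : Fin n → Finset (Fin k) → ℝ) (hx : IsLPSol G π ρ x)
    (hzero : ∀ (u : Fin n) (T : Finset (Fin k)),
      T.Nonempty → (T.card : ℝ) < Real.sqrt k → x u T = 0)
    (v : Fin n) :
    ∑ u ∈ BackNbhd G π v,
        ∑ T' ∈ univ.filter (fun T' : Finset (Fin k) => T'.Nonempty), x u T'
      ≤ Real.sqrt k * ρ := by

  obtain ⟨hpos, hchan, -⟩ := hx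
  have hk0 : (0:ℝ) < Real.sqrt k := Real.sqrt_pos.2 (by exact_mod_cast Nat.pos_of_ne_zero (by omega))
  have key : Real.sqrt k * ∑ u ∈ BackNbhd G π v,
      ∑ T' ∈ univ.filter (fun T' : Finset (Fin k) => T'.Nonempty), x u T' ≤ (k : ℝ) * ρ := by
    rw [Finset.mul_sum]
    have h1 : ∀ u ∈ BackNbhd G π v,
        Real.sqrt k * ∑ T' ∈ univ.filter (fun T' : Finset (Fin k) => T'.Nonempty), x u T'
        ≤ ∑ j : Fin k, ∑ T ∈ univ.filter (fun T : Finset (Fin k) => j ∈ T), x u T := by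
      intro u _
      rw [Finset.mul_sum]
      have step1 : ∑ T' ∈ univ.filter (fun T' : Finset (Fin k) => T'.Nonempty),
          Real.sqrt k * x u T'
          ≤ ∑ T' ∈ univ.filter (fun T' : Finset (Fin k) => T'.Nonempty),
            (T'.card : ℝ) * x u T' := by
        apply Finset.sum_le_sum
        intro T hT
        rcases eq_or_lt_of_le (hpos u T) with h0 | h0
        · rw [← h0, mul_zero, mul_zero]
        · apply mul_le_mul_of_nonneg_right _ (hpos u T)
          by_contra h
          push_neg at h
          exact absurd (hzero u T (Finset.mem_filter.mp hT).2 h) (ne_of_gt h0)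
      refine step1.trans ?_
      have step2 : ∑ T' ∈ univ.filter (fun T' : Finset (Fin k) => T'.Nonempty),
          (T'.card : ℝ) * x u T'
          = ∑ j : Fin k, ∑ T ∈ univ.filter (fun T : Finset (Fin k) => j ∈ T), x u T := by
        have e1 : ∀ T' : Finset (Fin k), (T'.card : ℝ) * x u T' = ∑ j ∈ T', x u T' := by
          intro T'; rw [Finset.sum_const, nsmul_eq_mul]
        calc ∑ T' ∈ univ.filter (fun T' : Finset (Fin k) => T'.Nonempty),
              (T'.card : ℝ) * x u T'
            = ∑ T' : Finset (Fin k), ∑ j ∈ T', x u T' := by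
              rw [Finset.sum_filter]
              apply Finset.sum_congr rfl
              intro T _
              by_cases hT : T.Nonempty
              · rw [if_pos hT, e1]
              · simp [Finset.not_nonempty_iff_eq_empty.mp hT]
          _ = ∑ j : Fin k, ∑ T ∈ univ.filter (fun T : Finset (Fin k) => j ∈ T), x u T := by
              rw [Finset.sum_comm' (s := univ) (t := fun T => T)
                (t' := univ) (s' := fun j => univ.filter (fun T => j ∈ T))]
              intro T j
              simp
      exact step2.le
    calc ∑ u ∈ BackNbhd G π v,
          Real.sqrt k * ∑ T' ∈ univ.filter (fun T' : Finset (Fin k) => T'.Nonempty), x u T'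
        ≤ ∑ u ∈ BackNbhd G π v,
            ∑ j : Fin k, ∑ T ∈ univ.filter (fun T : Finset (Fin k) => j ∈ T), x u T :=
          Finset.sum_le_sum h1
      _ = ∑ j : Fin k, ∑ u ∈ BackNbhd G π v,
            ∑ T ∈ univ.filter (fun T : Finset (Fin k) => j ∈ T), x u T := Finset.sum_comm
      _ ≤ ∑ _j : Fin k, ρ := Finset.sum_le_sum (fun j _ => hchan v j)
      _ = (k : ℝ) * ρ := by simp [mul_comm]
  rw [← mul_le_mul_iff_right₀ hk0]
  calc Real.sqrt k * ∑ u ∈ BackNbhd G π v,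
        ∑ T' ∈ univ.filter (fun T' : Finset (Fin k) => T'.Nonempty), x u T'
      ≤ (k : ℝ) * ρ := key
    _ = Real.sqrt k * (Real.sqrt k * ρ) := by
        rw [← mul_assoc, Real.mul_self_sqrt (by positivity)]
end

section
/- Let S be a partly feasible allocation on the vertex set V with |V| = n ≥ 1. Then there exists a subset W ⊆ V with |W| > n/2 such that for every v ∈ W, ∑_{u ∈ W, u ≠ v, S(u) ∩ S(v) ≠ ∅} w̄(u,v) < 1. (This is the key halving step in the conflict-resolution procedure: in each iteration, more than half of the remaining vertices can be kept while satisfying the full weight condition.) -/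
open Finset

/-- Symmetrized edge weights. -/
def wbar {n : ℕ} (w : Fin n → Fin n → ℝ) (u v : Fin n) : ℝ := w u v + w v u

/-- `M` is an independent set of the edge-weighted conflict graph `w`. -/
def WIndep {n : ℕ} (w : Fin n → Fin n → ℝ) (M : Finset (Fin n)) : Prop :=
  ∀ v ∈ M, ∑ u ∈ M, w u v < 1

/-- The edge-weighted conflict graph `w` has inductive independence number at
most `ρ` with respect to the ordering `π`. -/
def WIndIndepAtMost {n : ℕ} (w : Fin n → Fin n → ℝ) (π : Equiv.Perm (Fin n))
    (ρ : ℝ) : Prop :=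
  ∀ (v : Fin n) (M : Finset (Fin n)), (∀ u ∈ M, π u < π v) → WIndep w M →
    ∑ u ∈ M, wbar w u v ≤ ρ

/-- `x` is a fractional solution of the weighted LP. -/
def WIsLPSol {n k : ℕ} (w : Fin n → Fin n → ℝ) (π : Equiv.Perm (Fin n)) (ρ : ℝ)
    (x : Fin n → Finset (Fin k) → ℝ) : Prop :=
  (∀ v T, 0 ≤ x v T) ∧
  (∀ (v : Fin n) (j : Fin k),
      ∑ u ∈ univ.filter (fun u => π u < π v),
        ∑ T ∈ univ.filter (fun T : Finset (Fin k) => j ∈ T),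
          wbar w u v * x u T ≤ ρ) ∧
  (∀ v : Fin n, ∑ T : Finset (Fin k), x v T ≤ 1)

/-- `S` is a feasible allocation: for each channel `j`, the set of vertices
assigned channel `j` is an independent set of the weighted conflict graph. -/
def WFeasibleAlloc {n k : ℕ} (w : Fin n → Fin n → ℝ)
    (S : Fin n → Finset (Fin k)) : Prop :=
  ∀ j : Fin k, WIndep w (univ.filter fun v => j ∈ S v)

/-- `S` is a partly feasible allocation. -/
def PartlyFeasible {n k : ℕ} (w : Fin n → Fin n → ℝ) (π : Equiv.Perm (Fin n))
    (S : Fin n → Finset (Fin k)) : Prop :=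
  ∀ v : Fin n,
    ∑ u ∈ univ.filter (fun u => π u < π v ∧ (S u ∩ S v).Nonempty), wbar w u v
      < 1 / 2

open scoped Classical

noncomputable def pfK {n k : ℕ} (w : Fin n → Fin n → ℝ) (π : Equiv.Perm (Fin n))
    (S : Fin n → Finset (Fin k)) : ℕ → Finset (Fin n)
  | 0 => ∅
  | (m+1) =>
    if h : m < n then
      let v := π.symm ⟨n - 1 - m, by omega⟩
      if ∑ u ∈ (pfK w π S m).filter (fun u => (S u ∩ S v).Nonempty), wbar w u v < 1/2
      then insert v (pfK w π S m) else pfK w π S m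
    else pfK w π S m

section lemmas

variable {n k : ℕ} (w : Fin n → Fin n → ℝ) (π : Equiv.Perm (Fin n))
    (S : Fin n → Finset (Fin k))

lemma pfK_succ (m : ℕ) (h : m < n) :
    pfK w π S (m+1) =
      if ∑ u ∈ (pfK w π S m).filter
            (fun u => (S u ∩ S (π.symm ⟨n - 1 - m, by omega⟩)).Nonempty),
            wbar w u (π.symm ⟨n - 1 - m, by omega⟩) < 1/2
      then insert (π.symm ⟨n - 1 - m, by omega⟩) (pfK w π S m)
      else pfK w π S m := by
  simp only [pfK, dif_pos h]

lemma pfK_rank (m : ℕ) : ∀ u ∈ pfK w π S m, n - m ≤ (π u : ℕ) := by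
  induction m with
  | zero => simp [pfK]
  | succ m ih =>
    intro u hu
    by_cases h : m < n
    · rw [pfK_succ w π S m h] at hu
      split_ifs at hu with hc
      · rcases Finset.mem_insert.mp hu with rfl | hu
        · simp only [Equiv.apply_symm_apply]; omega
        · have := ih u hu; omega
      · have := ih u hu; omega
    · simp only [pfK, dif_neg h] at hu
      have := ih u hu; omega

lemma pfK_mono : Monotone (pfK w π S) := by
  apply monotone_nat_of_le_succ
  intro m
  by_cases h : m < n
  · rw [pfK_succ w π S m h]
    split_ifs
    · exact Finset.subset_insert _ _
    · exact le_refl _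
  · simp only [pfK, dif_neg h]; exact le_refl _

/-- New elements at step `m+1` are exactly the vertex of rank `n-1-m`. -/
lemma pfK_new {m : ℕ} {u : Fin n} (hu : u ∈ pfK w π S (m+1)) :
    u ∈ pfK w π S m ∨ (m < n ∧ (π u : ℕ) = n - 1 - m) := by
  by_cases h : m < n
  · rw [pfK_succ w π S m h] at hu
    split_ifs at hu with hc
    · rcases Finset.mem_insert.mp hu with rfl | hu
      · right; exact ⟨h, by simp [Equiv.apply_symm_apply]⟩
      · exact Or.inl hu
    · exact Or.inl hu
  · simp only [pfK, dif_neg h] at hu; exact Or.inl hu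

end lemmas

section lemmas2

variable {n k : ℕ} (w : Fin n → Fin n → ℝ) (π : Equiv.Perm (Fin n))
    (S : Fin n → Finset (Fin k))

lemma pfK_filter_gt (v : Fin n) :
    (pfK w π S n).filter (fun u => π v < π u) = pfK w π S (n - 1 - (π v : ℕ)) := by
  set r := (π v : ℕ) with hr
  have hrn : r < n := (π v).isLt
  set m := n - 1 - r with hm
  have haux : ∀ j, m ≤ j → ∀ u ∈ pfK w π S j, r < (π u : ℕ) → u ∈ pfK w π S m := by
    intro j hj
    induction j, hj using Nat.le_induction with
    | base => intro u hu _; exact hu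
    | succ j hj ih =>
      intro u hu hru
      rcases pfK_new w π S hu with hu' | ⟨hjn, hrank⟩
      · exact ih u hu' hru
      · omega
  apply Finset.Subset.antisymm
  · intro u hu
    rw [Finset.mem_filter] at hu
    exact haux n (by omega) u hu.1 (by exact_mod_cast hu.2)
  · intro u hu
    rw [Finset.mem_filter]
    have h1 : u ∈ pfK w π S n := pfK_mono w π S (by omega : m ≤ n) hu
    have h2 := pfK_rank w π S m u hu
    exact ⟨h1, by rw [Fin.lt_def]; omega⟩

lemma pfK_notMem_self (v : Fin n) : v ∉ pfK w π S (n - 1 - (π v : ℕ)) := by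
  intro hv
  have := pfK_rank w π S (n - 1 - (π v : ℕ)) v hv
  have hrn : (π v : ℕ) < n := (π v).isLt
  omega

lemma pfK_mem_succ_of_mem_n {v : Fin n} (hv : v ∈ pfK w π S n) :
    v ∈ pfK w π S (n - 1 - (π v : ℕ) + 1) := by
  set r := (π v : ℕ) with hr
  have hrn : r < n := (π v).isLt
  set m := n - 1 - r with hm
  have haux : ∀ j, m + 1 ≤ j → v ∈ pfK w π S j → v ∈ pfK w π S (m + 1) := by
    intro j hj
    induction j, hj using Nat.le_induction with
    | base => exact id
    | succ j hj ih =>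
      intro hv'
      rcases pfK_new w π S hv' with hv'' | ⟨hjn, hrank⟩
      · exact ih hv''
      · omega
  exact haux n (by omega) hv

lemma pfK_vtx_eq (v : Fin n) (h : n - 1 - (π v : ℕ) < n) :
    (π.symm ⟨n - 1 - (n - 1 - (π v : ℕ)), by omega⟩) = v := by
  have hrn : (π v : ℕ) < n := (π v).isLt
  have : (⟨n - 1 - (n - 1 - (π v : ℕ)), by omega⟩ : Fin n) = π v := by
    apply Fin.ext; simp; omega
  rw [this, Equiv.symm_apply_apply]

/-- Kept vertices satisfy the back-condition with strict inequality. -/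
lemma pfK_cond_of_mem {v : Fin n} (hv : v ∈ pfK w π S n) :
    ∑ u ∈ (pfK w π S (n - 1 - (π v : ℕ))).filter (fun u => (S u ∩ S v).Nonempty),
      wbar w u v < 1/2 := by
  have hrn : (π v : ℕ) < n := (π v).isLt
  set m := n - 1 - (π v : ℕ) with hm
  have hmn : m < n := by omega
  have hv1 := pfK_mem_succ_of_mem_n w π S hv
  rw [pfK_succ w π S m hmn] at hv1
  rw [pfK_vtx_eq π v hmn] at hv1  -- hope rewriting under ite works
  split_ifs at hv1 with hc
  · exact hc
  · exact absurd hv1 (pfK_notMem_self w π S v)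

/-- Removed vertices fail the back-condition. -/
lemma pfK_cond_of_notMem {v : Fin n} (hv : v ∉ pfK w π S n) :
    1/2 ≤ ∑ u ∈ (pfK w π S (n - 1 - (π v : ℕ))).filter (fun u => (S u ∩ S v).Nonempty),
      wbar w u v := by
  have hrn : (π v : ℕ) < n := (π v).isLt
  set m := n - 1 - (π v : ℕ) with hm
  have hmn : m < n := by omega
  by_contra hc
  push_neg at hc
  apply hv
  apply pfK_mono w π S (by omega : m + 1 ≤ n)
  rw [pfK_succ w π S m hmn, pfK_vtx_eq π v hmn, if_pos hc]
  exact Finset.mem_insert_self _ _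

end lemmas2

/-- the halving step: from a partly feasible allocation on `n ≥ 1`
vertices, more than half of the vertices can be kept while satisfying the full
weight condition. -/
theorem partly_feasible_halving {n k : ℕ} (hn : 1 ≤ n) (hk : 1 ≤ k)
    (w : Fin n → Fin n → ℝ) (hw : ∀ u v, 0 ≤ w u v) (hw0 : ∀ v, w v v = 0)
    (π : Equiv.Perm (Fin n))
    (S : Fin n → Finset (Fin k)) (hS : PartlyFeasible w π S) :
    ∃ W : Finset (Fin n), (n : ℝ) / 2 < (W.card : ℝ) ∧
      ∀ v ∈ W,
        ∑ u ∈ W.filter (fun u => u ≠ v ∧ (S u ∩ S v).Nonempty), wbar w u v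
          < 1 := by
    classical
  set W := pfK w π S n with hW
  have hwbar : ∀ u v : Fin n, 0 ≤ wbar w u v := fun u v => add_nonneg (hw u v) (hw v u)
  -- the filtered keep-set at the step of `v` agrees with `W` restricted to later vertices
  have hfilter : ∀ v : Fin n,
      W.filter (fun u => π v < π u ∧ (S u ∩ S v).Nonempty) =
        (pfK w π S (n - 1 - (π v : ℕ))).filter (fun u => (S u ∩ S v).Nonempty) := by
    intro v
    rw [← pfK_filter_gt w π S v, Finset.filter_filter]
  refine ⟨W, ?_, ?_⟩
  · -- counting
    set R := (univ : Finset (Fin n)) \ W with hR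
    have hWne : W.Nonempty := by
      rcases Finset.eq_empty_or_nonempty W with hE | hNE
      · exfalso
        have hv : (⟨0, by omega⟩ : Fin n) ∉ W := by simp [hE]
        have := pfK_cond_of_notMem w π S hv
        have h0 : pfK w π S (n - 1 - ((π ⟨0, by omega⟩ : Fin n) : ℕ)) ⊆ W :=
          pfK_mono w π S (by omega)
        rw [hE] at h0
        have hsub := Finset.subset_empty.mp h0
        rw [hsub] at this
        simp at this
        linarith
      · exact hNE
    have hv2 : ∀ v ∈ R, (1:ℝ)/2 ≤
        ∑ u ∈ W.filter (fun u => π v < π u ∧ (S u ∩ S v).Nonempty), wbar w u v := by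
      intro v hv
      rw [hfilter v]
      exact pfK_cond_of_notMem w π S (by simpa [hR] using hv)
    have hsig1 : (R.card : ℝ) * (1/2) ≤
        ∑ v ∈ R, ∑ u ∈ W.filter (fun u => π v < π u ∧ (S u ∩ S v).Nonempty), wbar w u v := by
      have := Finset.card_nsmul_le_sum R
        (fun v => ∑ u ∈ W.filter (fun u => π v < π u ∧ (S u ∩ S v).Nonempty), wbar w u v)
        ((1:ℝ)/2) hv2
      simpa [nsmul_eq_mul] using this
    have hswap :
        ∑ v ∈ R, ∑ u ∈ W.filter (fun u => π v < π u ∧ (S u ∩ S v).Nonempty), wbar w u v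
        = ∑ u ∈ W, ∑ v ∈ R,
            (if π v < π u ∧ (S u ∩ S v).Nonempty then wbar w u v else 0) := by
      rw [← Finset.sum_comm]
      apply Finset.sum_congr rfl
      intro v _
      rw [Finset.sum_filter]
    have hsig2 : ∀ u ∈ W,
        ∑ v ∈ R, (if π v < π u ∧ (S u ∩ S v).Nonempty then wbar w u v else 0) < 1/2 := by
      intro u _
      have h1 : ∑ v ∈ R, (if π v < π u ∧ (S u ∩ S v).Nonempty then wbar w u v else 0)
          ≤ ∑ v ∈ (univ : Finset (Fin n)),
              (if π v < π u ∧ (S u ∩ S v).Nonempty then wbar w u v else 0) := by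
        apply Finset.sum_le_sum_of_subset_of_nonneg (Finset.subset_univ R)
        intro v _ _
        split_ifs
        · exact hwbar u v
        · exact le_refl 0
      have h2 : ∑ v ∈ (univ : Finset (Fin n)),
            (if π v < π u ∧ (S u ∩ S v).Nonempty then wbar w u v else 0)
          = ∑ v ∈ univ.filter (fun v => π v < π u ∧ (S v ∩ S u).Nonempty), wbar w v u := by
        rw [← Finset.sum_filter]
        apply Finset.sum_congr
        · apply Finset.filter_congr
          intro v _
          rw [Finset.inter_comm]
        · intro v _
          exact add_comm _ _
      have h3 := hS u
      calc _ ≤ _ := h1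
        _ = _ := h2
        _ < 1/2 := h3
    have hsig3 : ∑ u ∈ W, ∑ v ∈ R,
        (if π v < π u ∧ (S u ∩ S v).Nonempty then wbar w u v else 0)
        < (W.card : ℝ) * (1/2) := by
      have := Finset.sum_lt_sum_of_nonempty hWne hsig2
      simpa [Finset.sum_const, nsmul_eq_mul] using this
    have hcard : (R.card : ℝ) < W.card := by
      have := hsig1.trans_lt (by rw [hswap]; exact hsig3)
      linarith
    have hWsub : W ⊆ univ := Finset.subset_univ W
    have hRcard : R.card = n - W.card := by
      rw [hR, Finset.card_sdiff_of_subset hWsub, Finset.card_univ, Fintype.card_fin]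
    have hWle : W.card ≤ n := by
      have := Finset.card_le_card hWsub
      simpa using this
    have : (R.card : ℝ) = (n : ℝ) - W.card := by
      rw [hRcard]
      push_cast [Nat.cast_sub hWle]
      ring
    linarith
  · -- per-vertex bound
    intro v hv
    have hsplit : W.filter (fun u => u ≠ v ∧ (S u ∩ S v).Nonempty)
        = W.filter (fun u => π u < π v ∧ (S u ∩ S v).Nonempty)
          ∪ W.filter (fun u => π v < π u ∧ (S u ∩ S v).Nonempty) := by
      ext u
      simp only [Finset.mem_filter, Finset.mem_union]
      constructor
      · rintro ⟨hu, hne, hC⟩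
        have : π u ≠ π v := fun h => hne (π.injective h)
        rcases lt_or_gt_of_ne this with h | h
        · exact Or.inl ⟨hu, h, hC⟩
        · exact Or.inr ⟨hu, h, hC⟩
      · rintro (⟨hu, h, hC⟩ | ⟨hu, h, hC⟩)
        · exact ⟨hu, fun he => absurd (he ▸ h) (lt_irrefl _), hC⟩
        · exact ⟨hu, fun he => by subst he; exact absurd h (lt_irrefl _), hC⟩
    have hdisj : Disjoint (W.filter (fun u => π u < π v ∧ (S u ∩ S v).Nonempty))
        (W.filter (fun u => π v < π u ∧ (S u ∩ S v).Nonempty)) := by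
      apply Finset.disjoint_filter_filter'
      rw [disjoint_iff_inf_le]
      intro u hu
      simp only [inf_eq_inter, Pi.inf_apply, inf_Prop_eq] at hu
      exact absurd (hu.1.1.trans hu.2.1) (lt_irrefl _)
    have hA : ∑ u ∈ W.filter (fun u => π u < π v ∧ (S u ∩ S v).Nonempty), wbar w u v
        < 1/2 := by
      have hsub : W.filter (fun u => π u < π v ∧ (S u ∩ S v).Nonempty)
          ⊆ univ.filter (fun u => π u < π v ∧ (S u ∩ S v).Nonempty) :=
        Finset.filter_subset_filter _ (Finset.subset_univ W)
      have := Finset.sum_le_sum_of_subset_of_nonneg hsub (fun u _ _ => hwbar u v)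
      exact this.trans_lt (hS v)
    have hB : ∑ u ∈ W.filter (fun u => π v < π u ∧ (S u ∩ S v).Nonempty), wbar w u v
        < 1/2 := by
      rw [hfilter v]
      exact pfK_cond_of_mem w π S hv
    rw [hsplit, Finset.sum_union hdisj]
    linarith
end

section
/- Let S be a partly feasible allocation on a vertex set V with |V| = n ≥ 2, and let valuations b : V × 2^[k] → ℝ≥0 with b(v,∅)=0 be given. Then there exist allocations S_1, ..., S_m with m ≤ ⌈log₂ n⌉ such that: (a) for every i and every v ∈ V, ∑_{u ≠ v, S_i(u) ∩ S_i(v) ≠ ∅} w̄(u,v) < 1 (in particular each S_i is a feasible allocation); (b) for every v, S_i(v) ∈ {S(v), ∅} for all i, and if S(v) ≠ ∅ then there is exactly one i with S_i(v) = S(v). Consequently, max_i b(S_i) ≥ b(S)/⌈log₂ n⌉, i.e., there exists a feasible allocation of value at least b(S)/⌈log₂ n⌉. -/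
open Finset

section Greedy

variable {n k : ℕ} (w : Fin n → Fin n → ℝ) (π : Equiv.Perm (Fin n))
  (S : Fin n → Finset (Fin k))

/-- Conflict cost between `u` and `v` under allocation `S`. -/
noncomputable def ccost (u v : Fin n) : ℝ :=
  if (S u ∩ S v).Nonempty then wbar w u v else 0

lemma ccost_nonneg (hw : ∀ u v, 0 ≤ w u v) (u v : Fin n) : 0 ≤ ccost w S u v := by
  unfold ccost wbar
  split
  · exact add_nonneg (hw u v) (hw v u)
  · exact le_refl 0

/-- The vertex of `π`-rank `n - 1 - t`. -/
def vtx (t : ℕ) (h : t < n) : Fin n := π.symm ⟨n - 1 - t, by omega⟩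

open scoped Classical in
/-- Greedy selection processing vertices in decreasing `π`-order. -/
noncomputable def build (R : Finset (Fin n)) : ℕ → Finset (Fin n)
  | 0 => ∅
  | (t+1) =>
    if h : t < n then
      if vtx π t h ∈ R ∧ ∑ u ∈ build R t, ccost w S u (vtx π t h) < 1/2 then
        insert (vtx π t h) (build R t)
      else build R t
    else build R t

lemma build_subset (R : Finset (Fin n)) : ∀ t, build w π S R t ⊆ R := by
  intro t
  induction t with
  | zero => simp [build]
  | succ t ih =>
    rw [build]
    split
    · split
      · next hc => exact insert_subset hc.1 ih
      · exact ih
    · exact ih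

lemma mem_build_rank (R : Finset (Fin n)) :
    ∀ t, ∀ u ∈ build w π S R t, n - t ≤ (π u : ℕ) := by
  intro t
  induction t with
  | zero => simp [build]
  | succ t ih =>
    rw [build]
    split
    · split
      · intro u hu
        rcases mem_insert.1 hu with rfl | hu
        · simp only [vtx, Equiv.apply_symm_apply]
          omega
        · have := ih u hu; omega
      · intro u hu; have := ih u hu; omega
    · intro u hu; have := ih u hu; omega

lemma build_agree (R : Finset (Fin n)) {t : ℕ} (ht : t ≤ n) :
    ∀ t', t ≤ t' →
      build w π S R t = (build w π S R t').filter (fun u => n - t ≤ (π u : ℕ)) := by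
  intro t' htt'
  induction t' with
  | zero =>
    have : t = 0 := Nat.le_zero.mp htt'
    subst this
    simp [build]
  | succ t' ih =>
    rcases Nat.eq_or_lt_of_le htt' with rfl | hlt
    · exact (filter_eq_self.mpr (fun u hu => mem_build_rank w π S R _ u hu)).symm
    · have htt'' : t ≤ t' := Nat.lt_succ_iff.mp hlt
      rw [build]
      split
      · next h =>
        split
        · next hc =>
          rw [filter_insert]
          have hv : ¬ (n - t ≤ ((π (vtx π t' h) : ℕ))) := by
            simp only [vtx, Equiv.apply_symm_apply]
            omega
          rw [if_neg hv]
          exact ih htt''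
        · exact ih htt''
      · exact ih htt''

/-- The greedily chosen subset of `R`. -/
noncomputable def chosen (R : Finset (Fin n)) : Finset (Fin n) := build w π S R n

lemma chosen_subset (R : Finset (Fin n)) : chosen w π S R ⊆ R := build_subset w π S R n

lemma chosen_mem_iff (R : Finset (Fin n)) (v : Fin n) :
    v ∈ chosen w π S R ↔ v ∈ R ∧
      ∑ u ∈ (chosen w π S R).filter (fun u => π v < π u), ccost w S u v < 1/2 := by
  classical
  have hr : (π v : ℕ) < n := (π v).2
  set r : ℕ := (π v : ℕ) with hrdef
  set t : ℕ := n - 1 - r with htdef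
  have htn : t < n := by omega
  have hvtx : vtx π t htn = v := by
    have h1 : (⟨n - 1 - t, by omega⟩ : Fin n) = π v := by
      apply Fin.ext
      simp only []
      omega
    simp only [vtx, h1, Equiv.symm_apply_apply]
  have step : v ∈ build w π S R (t+1) ↔
      (v ∈ R ∧ ∑ u ∈ build w π S R t, ccost w S u v < 1/2) := by
    rw [build, dif_pos htn, hvtx]
    split
    · next hc => exact iff_of_true (mem_insert_self v _) hc
    · next hc =>
      constructor
      · intro hv
        have := mem_build_rank w π S R t v hv
        omega
      · intro hc'
        exact absurd hc' hc
  have hbt : build w π S R t = (chosen w π S R).filter (fun u => π v < π u) := by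
    rw [build_agree w π S R htn.le n htn.le]
    apply filter_congr
    intro u _
    rw [Fin.lt_def]
    constructor <;> intro h <;> omega
  have hb1 : v ∈ build w π S R (t+1) ↔ v ∈ chosen w π S R := by
    rw [build_agree w π S R (by omega : t + 1 ≤ n) n (by omega), mem_filter]
    have : n - (t+1) ≤ r := by omega
    tauto
  rw [← hb1, step, hbt]

lemma wbar_comm (u v : Fin n) : wbar w u v = wbar w v u := by
  unfold wbar; ring

lemma wbar_nonneg (hw : ∀ u v, 0 ≤ w u v) (u v : Fin n) : 0 ≤ wbar w u v :=
  add_nonneg (hw u v) (hw v u)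

lemma chosen_nonempty (R : Finset (Fin n)) (hR : R.Nonempty) :
    (chosen w π S R).Nonempty := by
  by_contra hC
  rw [not_nonempty_iff_eq_empty] at hC
  obtain ⟨v, hv⟩ := hR
  have := (chosen_mem_iff w π S R v).mpr ⟨hv, by rw [hC]; simp⟩
  rw [hC] at this
  exact absurd this (notMem_empty v)

lemma rej_lt (hw : ∀ u v, 0 ≤ w u v) (hS : PartlyFeasible w π S)
    (R : Finset (Fin n)) (hR : R.Nonempty) :
    2 * (R \ chosen w π S R).card < R.card := by
  classical
  set C := chosen w π S R with hCdef
  have hC : C.Nonempty := chosen_nonempty w π S R hR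
  -- every rejected vertex has blocking sum at least 1/2
  have h1 : ∀ v ∈ R \ C, (1:ℝ)/2 ≤ ∑ u ∈ C.filter (fun u => π v < π u), ccost w S u v := by
    intro v hv
    rw [mem_sdiff] at hv
    have := (chosen_mem_iff w π S R v).not.mp hv.2
    push_neg at this
    exact this hv.1
  -- double counting
  have h2 : ∑ v ∈ R \ C, ∑ u ∈ C.filter (fun u => π v < π u), ccost w S u v
      = ∑ u ∈ C, ∑ v ∈ R \ C, (if π v < π u then ccost w S u v else 0) := by
    simp_rw [sum_filter]
    exact sum_comm
  have h3 : ∀ u ∈ C, ∑ v ∈ R \ C, (if π v < π u then ccost w S u v else 0) < 1/2 := by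
    intro u _
    have hle : ∑ v ∈ R \ C, (if π v < π u then ccost w S u v else 0)
        ≤ ∑ v : Fin n, (if π v < π u then ccost w S u v else 0) := by
      apply sum_le_sum_of_subset_of_nonneg (subset_univ _)
      intro v _ _
      split
      · exact ccost_nonneg w S hw u v
      · exact le_refl 0
    have heq : ∑ v : Fin n, (if π v < π u then ccost w S u v else 0)
        = ∑ v ∈ univ.filter (fun v => π v < π u ∧ (S v ∩ S u).Nonempty), wbar w v u := by
      rw [sum_filter]
      apply sum_congr rfl
      intro v _
      unfold ccost
      rw [Finset.inter_comm (S v) (S u), wbar_comm w v u]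
      by_cases h1' : π v < π u <;> by_cases h2' : (S u ∩ S v).Nonempty <;>
        simp [h1', h2']
    calc ∑ v ∈ R \ C, (if π v < π u then ccost w S u v else 0)
        ≤ ∑ v : Fin n, (if π v < π u then ccost w S u v else 0) := hle
      _ = _ := heq
      _ < 1/2 := hS u
  have hlow : ((R \ C).card : ℝ) * (1/2)
      ≤ ∑ v ∈ R \ C, ∑ u ∈ C.filter (fun u => π v < π u), ccost w S u v := by
    have := Finset.card_nsmul_le_sum (R \ C) _ ((1:ℝ)/2) h1
    rwa [nsmul_eq_mul] at this
  have hhigh : ∑ u ∈ C, ∑ v ∈ R \ C, (if π v < π u then ccost w S u v else 0)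
      < (C.card : ℝ) * (1/2) := by
    have := Finset.sum_lt_sum_of_nonempty hC h3
    rwa [sum_const, nsmul_eq_mul] at this
  have hcast : ((R \ C).card : ℝ) < (C.card : ℝ) := by
    have := hlow.trans_lt (h2 ▸ hhigh)
    nlinarith
  have hcard : (R \ C).card < C.card := Nat.cast_lt.mp hcast
  have h5 := Finset.card_sdiff_add_card_eq_card (chosen_subset w π S R)
  rw [← hCdef] at h5
  omega

/-- In-class total conflict bound. -/
lemma class_bound (hw : ∀ u v, 0 ≤ w u v) (hS : PartlyFeasible w π S)
    (R : Finset (Fin n)) (v : Fin n) (hv : v ∈ chosen w π S R) :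
    ∑ u ∈ (chosen w π S R).filter (fun u => u ≠ v ∧ (S u ∩ S v).Nonempty),
      wbar w u v < 1 := by
  classical
  set C := chosen w π S R with hCdef
  set F := C.filter (fun u => u ≠ v ∧ (S u ∩ S v).Nonempty) with hFdef
  have hsplit : ∑ u ∈ F, wbar w u v
      = ∑ u ∈ F.filter (fun u => π v < π u), wbar w u v
        + ∑ u ∈ F.filter (fun u => ¬ π v < π u), wbar w u v :=
    (sum_filter_add_sum_filter_not F _ _).symm
  have hup : ∑ u ∈ F.filter (fun u => π v < π u), wbar w u v < 1/2 := by
    have heq : ∑ u ∈ F.filter (fun u => π v < π u), wbar w u v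
        = ∑ u ∈ F.filter (fun u => π v < π u), ccost w S u v := by
      apply sum_congr rfl
      intro u hu
      rw [mem_filter, hFdef, mem_filter] at hu
      unfold ccost
      rw [if_pos hu.1.2.2]
    rw [heq]
    have hsub : F.filter (fun u => π v < π u) ⊆ C.filter (fun u => π v < π u) := by
      intro u hu
      rw [mem_filter] at hu ⊢
      rw [hFdef, mem_filter] at hu
      exact ⟨hu.1.1, hu.2⟩
    have hle := sum_le_sum_of_subset_of_nonneg hsub
      (fun u _ _ => ccost_nonneg w S hw u v)
    exact hle.trans_lt (((chosen_mem_iff w π S R v).mp hv).2)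
  have hdown : ∑ u ∈ F.filter (fun u => ¬ π v < π u), wbar w u v < 1/2 := by
    have hsub : F.filter (fun u => ¬ π v < π u)
        ⊆ univ.filter (fun u => π u < π v ∧ (S u ∩ S v).Nonempty) := by
      intro u hu
      rw [mem_filter] at hu ⊢
      rw [hFdef, mem_filter] at hu
      refine ⟨mem_univ u, ?_, hu.1.2.2⟩
      have hne : π u ≠ π v := fun h => hu.1.2.1 (π.injective h)
      rcases lt_or_gt_of_ne hne with h | h
      · exact h
      · exact absurd h hu.2
    have hle := sum_le_sum_of_subset_of_nonneg hsub
      (fun u _ _ => wbar_nonneg w hw u v)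
    exact hle.trans_lt (hS v)
  rw [hsplit]
  linarith

/-- Iterated greedy: remaining vertices after `t` rounds. -/
noncomputable def Rseq : ℕ → Finset (Fin n)
  | 0 => univ
  | (t+1) => Rseq t \ chosen w π S (Rseq t)

lemma Rseq_succ_subset (t : ℕ) : Rseq w π S (t+1) ⊆ Rseq w π S t :=
  sdiff_subset

lemma Rseq_anti {t t' : ℕ} (h : t ≤ t') : Rseq w π S t' ⊆ Rseq w π S t := by
  induction t' with
  | zero => rw [Nat.le_zero.mp h]
  | succ t' ih =>
    rcases Nat.eq_or_lt_of_le h with rfl | hlt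
    · exact subset_rfl
    · exact (Rseq_succ_subset w π S t').trans (ih (Nat.lt_succ_iff.mp hlt))

lemma Rseq_card_step (hw : ∀ u v, 0 ≤ w u v) (hS : PartlyFeasible w π S) (t : ℕ)
    (h : (Rseq w π S t).Nonempty) :
    2 * (Rseq w π S (t+1)).card < (Rseq w π S t).card :=
  rej_lt w π S hw hS _ h

lemma Rseq_zero_step (t : ℕ) (h : (Rseq w π S t).card = 0) :
    (Rseq w π S (t+1)).card = 0 := by
  rw [card_eq_zero] at h ⊢
  rw [show Rseq w π S (t+1) = Rseq w π S t \ chosen w π S (Rseq w π S t) from rfl, h]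
  simp

lemma Rseq_empty (hn : 2 ≤ n) (hw : ∀ u v, 0 ≤ w u v) (hS : PartlyFeasible w π S) :
    Rseq w π S (Nat.clog 2 n) = ∅ := by
  set m := Nat.clog 2 n with hm
  have hm1 : 1 ≤ m := Nat.clog_pos one_lt_two hn
  have hn2m : n ≤ 2 ^ m := Nat.le_pow_clog one_lt_two n
  have key : ∀ t, 1 ≤ t → t ≤ m → 2 ^ t * ((Rseq w π S t).card + 1) ≤ 2 ^ m := by
    intro t
    induction t with
    | zero => omega
    | succ t ih =>
      intro _ hsm
      rcases Nat.eq_zero_or_pos t with rfl | ht1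
      · -- base case t = 1
        rcases Nat.eq_zero_or_pos (Rseq w π S 0).card with h0 | h0
        · have h1 := Rseq_zero_step w π S 0 h0
          rw [h1]
          have h2 := Nat.pow_le_pow_right (by norm_num : 1 ≤ 2) hsm
          omega
        · have hne : (Rseq w π S 0).Nonempty := card_pos.mp h0
          have hstep := Rseq_card_step w π S hw hS 0 hne
          have hcard0 : (Rseq w π S 0).card = n := by
            simp [Rseq]
          rw [hcard0] at hstep
          -- 2 * r1 < n ≤ 2^m, and 2^m = 2 * 2^(m-1)
          have h2m : 2 ^ m = 2 * 2 ^ (m - 1) := by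
            rw [← pow_succ']
            congr 1
            omega
          have hp : (2:ℕ) ^ (0+1) = 2 := by norm_num
          omega
      · have iht := ih ht1 (by omega)
        rcases Nat.eq_zero_or_pos (Rseq w π S t).card with h0 | h0
        · have h1 := Rseq_zero_step w π S t h0
          rw [h1]
          calc 2 ^ (t+1) * (0 + 1) = 2 ^ (t+1) := by ring
            _ ≤ 2 ^ m := Nat.pow_le_pow_right (by norm_num) hsm
        · have hne : (Rseq w π S t).Nonempty := card_pos.mp h0
          have hstep := Rseq_card_step w π S hw hS t hne
          calc 2 ^ (t+1) * ((Rseq w π S (t+1)).card + 1)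
              = 2 ^ t * (2 * (Rseq w π S (t+1)).card + 2) := by ring
            _ ≤ 2 ^ t * ((Rseq w π S t).card + 1) := by
                apply Nat.mul_le_mul_left
                omega
            _ ≤ 2 ^ m := iht
  have hkey := key m hm1 le_rfl
  have hpos : 0 < 2 ^ m := Nat.pow_pos (by norm_num)
  have h6 : 2 ^ m * ((Rseq w π S m).card + 1) ≤ 2 ^ m * 1 := by simpa using hkey
  have h7 := Nat.le_of_mul_le_mul_left h6 hpos
  have : (Rseq w π S m).card = 0 := by omega
  exact card_eq_zero.mp this

lemma Rseq_cover (hn : 2 ≤ n) (hw : ∀ u v, 0 ≤ w u v) (hS : PartlyFeasible w π S)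
    (v : Fin n) : ∃ t < Nat.clog 2 n, v ∈ chosen w π S (Rseq w π S t) := by
  have hnot : v ∉ Rseq w π S (Nat.clog 2 n) := by
    rw [Rseq_empty w π S hn hw hS]; exact notMem_empty v
  have key : ∀ t, v ∉ Rseq w π S t → ∃ s < t, v ∈ chosen w π S (Rseq w π S s) := by
    intro t
    induction t with
    | zero => intro h; exact absurd (mem_univ v) h
    | succ t ih =>
      intro h
      by_cases h' : v ∈ Rseq w π S t
      · refine ⟨t, Nat.lt_succ_self t, ?_⟩
        rw [show Rseq w π S (t+1) = Rseq w π S t \ chosen w π S (Rseq w π S t) from rfl,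
          mem_sdiff] at h
        push_neg at h
        exact h h'
      · obtain ⟨s, hs, hsm⟩ := ih h'
        exact ⟨s, hs.trans (Nat.lt_succ_self t), hsm⟩
  exact key _ hnot

lemma Rseq_disj {t t' : ℕ} (h : t < t') (v : Fin n)
    (hv : v ∈ chosen w π S (Rseq w π S t)) : v ∉ chosen w π S (Rseq w π S t') := by
  intro hv'
  have h1 : v ∈ Rseq w π S t' := chosen_subset w π S _ hv'
  have h2 : Rseq w π S t' ⊆ Rseq w π S (t+1) := Rseq_anti w π S h
  have := h2 h1
  rw [show Rseq w π S (t+1) = Rseq w π S t \ chosen w π S (Rseq w π S t) from rfl,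
    mem_sdiff] at this
  exact this.2 hv

/-- The allocation restricted to the `t`-th greedily chosen class. -/
noncomputable def classAlloc (t : ℕ) (v : Fin n) : Finset (Fin k) :=
  if v ∈ chosen w π S (Rseq w π S t) then S v else ∅

lemma classAlloc_bound (hw : ∀ u v, 0 ≤ w u v) (hS : PartlyFeasible w π S)
    (t : ℕ) (v : Fin n) :
    ∑ u ∈ univ.filter
        (fun u => u ≠ v ∧ (classAlloc w π S t u ∩ classAlloc w π S t v).Nonempty),
      wbar w u v < 1 := by
  classical
  by_cases hv : v ∈ chosen w π S (Rseq w π S t)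
  · have hfeq : univ.filter
        (fun u => u ≠ v ∧ (classAlloc w π S t u ∩ classAlloc w π S t v).Nonempty)
        = (chosen w π S (Rseq w π S t)).filter
            (fun u => u ≠ v ∧ (S u ∩ S v).Nonempty) := by
      ext u
      simp only [mem_filter, mem_univ, true_and, classAlloc, if_pos hv]
      by_cases hu : u ∈ chosen w π S (Rseq w π S t) <;> simp [hu]
    rw [hfeq]
    exact class_bound w π S hw hS _ v hv
  · have hfeq : univ.filter
        (fun u => u ≠ v ∧ (classAlloc w π S t u ∩ classAlloc w π S t v).Nonempty)
        = ∅ := by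
      rw [filter_eq_empty_iff]
      intro u _
      simp [classAlloc, hv]
    rw [hfeq, sum_empty]
    norm_num

lemma classAlloc_feasible (hw : ∀ u v, 0 ≤ w u v) (hw0 : ∀ v, w v v = 0)
    (hS : PartlyFeasible w π S) (t : ℕ) (j : Fin k) :
    WIndep w (univ.filter fun v => j ∈ classAlloc w π S t v) := by
  classical
  intro v hv
  set M := univ.filter fun v => j ∈ classAlloc w π S t v with hM
  have hjv : j ∈ classAlloc w π S t v := (mem_filter.mp hv).2
  rw [← Finset.add_sum_erase M _ hv, hw0 v, zero_add]
  have hle : ∑ u ∈ M.erase v, w u v ≤ ∑ u ∈ M.erase v, wbar w u v := by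
    apply sum_le_sum
    intro u _
    unfold wbar
    nlinarith [hw v u]
  have hsub : M.erase v ⊆ univ.filter
      (fun u => u ≠ v ∧ (classAlloc w π S t u ∩ classAlloc w π S t v).Nonempty) := by
    intro u hu
    rw [mem_erase] at hu
    have hju : j ∈ classAlloc w π S t u := (mem_filter.mp hu.2).2
    rw [mem_filter]
    exact ⟨mem_univ u, hu.1, ⟨j, mem_inter.mpr ⟨hju, hjv⟩⟩⟩
  have hle2 := sum_le_sum_of_subset_of_nonneg hsub
    (fun u _ _ => wbar_nonneg w hw u v)
  calc ∑ u ∈ M.erase v, w u v ≤ ∑ u ∈ M.erase v, wbar w u v := hle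
    _ ≤ _ := hle2
    _ < 1 := classAlloc_bound w π S hw hS t v

end Greedy

/-- a partly feasible allocation can be decomposed into at most
`⌈log₂ n⌉` feasible allocations, one of which has value at least
`b(S) / ⌈log₂ n⌉`. (`Nat.clog 2 n = ⌈log₂ n⌉`.) -/
theorem partly_feasible_decomposition {n k : ℕ} (hn : 2 ≤ n) (hk : 1 ≤ k)
    (w : Fin n → Fin n → ℝ) (hw : ∀ u v, 0 ≤ w u v) (hw0 : ∀ v, w v v = 0)
    (π : Equiv.Perm (Fin n))
    (b : Fin n → Finset (Fin k) → ℝ) (hb : ∀ v T, 0 ≤ b v T)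
    (hb0 : ∀ v, b v ∅ = 0)
    (S : Fin n → Finset (Fin k)) (hS : PartlyFeasible w π S) :
    ∃ (m : ℕ) (Sf : Fin m → Fin n → Finset (Fin k)),
      m ≤ Nat.clog 2 n ∧
      (∀ (i : Fin m) (v : Fin n),
        ∑ u ∈ univ.filter (fun u => u ≠ v ∧ (Sf i u ∩ Sf i v).Nonempty),
            wbar w u v < 1) ∧
      (∀ i : Fin m, WFeasibleAlloc w (Sf i)) ∧
      (∀ (i : Fin m) (v : Fin n), Sf i v = S v ∨ Sf i v = ∅) ∧
      (∀ v : Fin n, S v ≠ ∅ → ∃! i : Fin m, Sf i v = S v) ∧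
      (∃ i : Fin m,
        (∑ v : Fin n, b v (S v)) / (Nat.clog 2 n : ℝ)
          ≤ ∑ v : Fin n, b v (Sf i v)) := by
  classical
  have hm1 : 1 ≤ Nat.clog 2 n := Nat.clog_pos one_lt_two hn
  have huniq : ∀ v : Fin n, ∀ t t' : ℕ, v ∈ chosen w π S (Rseq w π S t) →
      v ∈ chosen w π S (Rseq w π S t') → t = t' := by
    intro v t t' h h'
    by_contra hne
    rcases Nat.lt_or_ge t t' with hlt | hge
    · exact Rseq_disj w π S hlt v h h'
    · exact Rseq_disj w π S (by omega : t' < t) v h' h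
  refine ⟨Nat.clog 2 n, fun i => classAlloc w π S i.1, le_rfl, ?_, ?_, ?_, ?_, ?_⟩
  · intro i v
    exact classAlloc_bound w π S hw hS i.1 v
  · intro i j
    exact classAlloc_feasible w π S hw hw0 hS i.1 j
  · intro i v
    by_cases hv : v ∈ chosen w π S (Rseq w π S i.1)
    · left; simp [classAlloc, hv]
    · right; simp [classAlloc, hv]
  · intro v hv
    obtain ⟨t, htm, hvC⟩ := Rseq_cover w π S hn hw hS v
    refine ⟨⟨t, htm⟩, by simp [classAlloc, hvC], ?_⟩
    intro i hi
    by_cases hvi : v ∈ chosen w π S (Rseq w π S i.1)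
    · exact Fin.ext (huniq v i.1 t hvi hvC)
    · exfalso
      apply hv
      rw [← hi]
      simp [classAlloc, hvi]
  · -- value bound
    have hsum : ∑ i : Fin (Nat.clog 2 n), ∑ v : Fin n, b v (classAlloc w π S i.1 v)
        = ∑ v : Fin n, b v (S v) := by
      rw [Finset.sum_comm]
      apply sum_congr rfl
      intro v _
      by_cases hSv : S v = ∅
      · rw [hSv, hb0 v]
        apply sum_eq_zero
        intro i _
        have hc : classAlloc w π S i.1 v = ∅ := by
          unfold classAlloc
          rw [hSv, ite_self]
        rw [hc, hb0]
      · obtain ⟨t, htm, hvC⟩ := Rseq_cover w π S hn hw hS v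
        rw [Finset.sum_eq_single (⟨t, htm⟩ : Fin (Nat.clog 2 n))]
        · simp [classAlloc, hvC]
        · intro i _ hne
          have hvi : v ∉ chosen w π S (Rseq w π S i.1) := by
            intro hvi
            exact hne (Fin.ext (huniq v i.1 t hvi hvC))
          simp [classAlloc, hvi, hb0]
        · intro h
          exact absurd (mem_univ _) h
    have hne : (univ : Finset (Fin (Nat.clog 2 n))).Nonempty :=
      ⟨⟨0, hm1⟩, mem_univ _⟩
    have hm0 : (Nat.clog 2 n : ℝ) ≠ 0 := by positivity
    have hconst : ∑ _i : Fin (Nat.clog 2 n),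
        ((∑ v : Fin n, b v (S v)) / (Nat.clog 2 n : ℝ)) = ∑ v : Fin n, b v (S v) := by
      rw [sum_const, card_univ, Fintype.card_fin, nsmul_eq_mul]
      field_simp
    obtain ⟨i, _, hi⟩ := Finset.exists_le_of_sum_le hne
      (le_of_eq (hconst.trans hsum.symm))
    exact ⟨i, hi⟩
end

section
/- Disk graphs have inductive independence number at most 5 with respect to the ordering by non-increasing radius. Precisely: let a disk graph on points p_1,...,p_n ∈ ℝ² with radii r_1,...,r_n > 0 be given, let v be a vertex, and let M be an independent set of vertices such that every u ∈ M is adjacent to v and r_u ≥ r_v for every u ∈ M. Then |M| ≤ 5. -/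
open Finset

open Real in
/-- Among 6 angles in `(-π, π]`, two (distinct indices) have
`cos` of their difference at least `1/2`. -/
lemma six_angles (θ : Fin 6 → ℝ) (hθ : ∀ k, θ k ∈ Set.Ioc (-π) π) :
    ∃ i j, i ≠ j ∧ (1:ℝ)/2 ≤ Real.cos (θ i - θ j) := by
  by_contra hcon
  push_neg at hcon
  have key : ∀ i j, i ≠ j → π/3 < |θ i - θ j| := by
    intro i j hij
    by_contra hle
    push_neg at hle
    have hpim : π/3 ≤ π := by linarith [Real.pi_pos]
    have h1 : Real.cos (π/3) ≤ Real.cos |θ i - θ j| :=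
      Real.cos_le_cos_of_nonneg_of_le_pi (abs_nonneg _) hpim hle
    rw [Real.cos_abs, Real.cos_pi_div_three] at h1
    exact absurd (hcon i j hij) (not_lt.2 h1)
  set σ := Tuple.sort θ with hσ
  set g : Fin 6 → ℝ := θ ∘ σ with hg
  have mono : Monotone g := Tuple.monotone_sort θ
  have hinj : Function.Injective σ := (Tuple.sort θ).injective
  have gap : ∀ i j : Fin 6, i ≠ j → i ≤ j → π/3 < g j - g i := by
    intro i j hij hle
    have h1 := key (σ j) (σ i) (fun h => hij.symm (hinj h))
    have h2 : g i ≤ g j := mono hle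
    have habs : |θ (σ j) - θ (σ i)| = g j - g i := by
      rw [show θ (σ j) - θ (σ i) = g j - g i from rfl,
        abs_of_nonneg (sub_nonneg.2 h2)]
    rw [habs] at h1; exact h1
  have g01 := gap 0 1 (by decide) (by decide)
  have g12 := gap 1 2 (by decide) (by decide)
  have g23 := gap 2 3 (by decide) (by decide)
  have g34 := gap 3 4 (by decide) (by decide)
  have g45 := gap 4 5 (by decide) (by decide)
  have hb0 := hθ (σ 0)
  have hb5 := hθ (σ 5)
  have hD : g 5 - g 0 < 2 * π := by
    have := hb0.1; have := hb5.2; simp only [hg, Function.comp] at *  ; linarith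
  have hDlb : 5 * (π/3) < g 5 - g 0 := by linarith
  have hcos : Real.cos (g 5 - g 0) < 1/2 := hcon (σ 5) (σ 0) (fun h => by
    have := hinj h; exact absurd this (by decide))
  have h2 : Real.cos (π/3) ≤ Real.cos (2*π - (g 5 - g 0)) :=
    Real.cos_le_cos_of_nonneg_of_le_pi (by linarith) (by linarith [Real.pi_pos]) (by linarith)
  rw [Real.cos_two_pi_sub, Real.cos_pi_div_three] at h2
  exact absurd hcos (not_lt.2 h2)

/-- If two nonzero complex numbers point in directions within 60 degrees and
both have modulus at most `R`, their difference has modulus at most `R`. -/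
lemma close_dirs {z w : ℂ} (hz : z ≠ 0) (hw : w ≠ 0)
    (hc : (1:ℝ)/2 ≤ Real.cos (z.arg - w.arg)) {R : ℝ}
    (hza : ‖z‖ ≤ R) (hwa : ‖w‖ ≤ R) :
    ‖z - w‖ ≤ R := by
  have hwc : (starRingEnd ℂ) w ≠ 0 := by simpa using hw
  have hzw : z * (starRingEnd ℂ) w ≠ 0 := mul_ne_zero hz hwc
  have hang : (((z * (starRingEnd ℂ) w).arg : Real.Angle)) = ((z.arg - w.arg : ℝ) : Real.Angle) := by
    rw [Complex.arg_mul_coe_angle hz hwc, Complex.arg_conj_coe_angle, sub_eq_add_neg,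
      Real.Angle.coe_add, Real.Angle.coe_neg]
  have hcos : Real.cos ((z * (starRingEnd ℂ) w).arg) = Real.cos (z.arg - w.arg) := by
    rw [← Real.Angle.cos_coe, ← Real.Angle.cos_coe, hang]
  have hre : (z * (starRingEnd ℂ) w).re
      = ‖z‖ * ‖w‖ * Real.cos (z.arg - w.arg) := by
    have h2 : ‖z * (starRingEnd ℂ) w‖ = ‖z‖ * ‖w‖ := by
      rw [norm_mul, Complex.norm_conj]
    have habs : ‖z * (starRingEnd ℂ) w‖ ≠ 0 := by
      simpa using hzw
    have h1 : (z * (starRingEnd ℂ) w).re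
        = ‖z * (starRingEnd ℂ) w‖ * Real.cos ((z * (starRingEnd ℂ) w).arg) := by
      rw [Complex.cos_arg hzw,
        mul_comm (‖z * (starRingEnd ℂ) w‖), div_mul_cancel₀ _ habs]
    rw [h1, h2, hcos]
  have ha : (0:ℝ) ≤ ‖z‖ := norm_nonneg z
  have hb : (0:ℝ) ≤ ‖w‖ := norm_nonneg w
  have hsq : ‖z - w‖ ^ 2
      = ‖z‖ ^ 2 + ‖w‖ ^ 2 - 2 * (z * (starRingEnd ℂ) w).re := by
    rw [Complex.sq_norm, Complex.sq_norm, Complex.sq_norm, Complex.normSq_sub]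
  have hR : (0:ℝ) ≤ R := le_trans ha hza
  by_contra hgt
  push_neg at hgt
  have hre2 : ‖z‖ * ‖w‖ * (1/2) ≤ (z * (starRingEnd ℂ) w).re := by
    rw [hre]
    exact mul_le_mul_of_nonneg_left hc (mul_nonneg ha hb)
  nlinarith [mul_nonneg (sub_nonneg.2 hza) (sub_nonneg.2 hwa), norm_nonneg (z - w)]

/-- disk graphs have inductive independence number at most 5 with
respect to the ordering by non-increasing radius: if `M` is an independent set
of the disk graph all of whose members are adjacent to `v` and have radius at
least `r v`, then `|M| ≤ 5`. -/
theorem disk_graph_inductive_independence_le_five {n : ℕ}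
    (p : Fin n → EuclideanSpace ℝ (Fin 2)) (r : Fin n → ℝ)
    (hr : ∀ i, 0 < r i) (v : Fin n) (M : Finset (Fin n))
    (hadj : ∀ u ∈ M, u ≠ v ∧ dist (p u) (p v) ≤ r u + r v)
    (hru : ∀ u ∈ M, r v ≤ r u)
    (hindep : ∀ u ∈ M, ∀ u' ∈ M, u ≠ u' → r u + r u' < dist (p u) (p u')) :
    M.card ≤ 5 := by
  by_contra hcard
  push_neg at hcard
  obtain ⟨M', hsub, hcard6⟩ := Finset.exists_subset_card_eq (show 6 ≤ M.card from hcard)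
  set e := M'.orderIsoOfFin hcard6 with he
  set w : Fin 6 → Fin n := fun k => (e k : Fin n) with hw
  have hwM : ∀ k, w k ∈ M := fun k => hsub (e k).2
  have hwinj : Function.Injective w := fun a b h => e.injective (Subtype.ext h)
  -- identify the plane with ℂ
  set li := (Complex.isometryOfOrthonormal (EuclideanSpace.basisFun (Fin 2) ℝ)).symm with hli
  set q : Fin n → ℂ := fun i => li (p i) with hq
  have hdist : ∀ i j, dist (q i) (q j) = dist (p i) (p j) := fun i j => li.dist_map _ _
  -- no member is at the center
  have hne : ∀ k, p (w k) ≠ p v := by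
    intro k hEq
    set k' : Fin 6 := if k = 0 then 1 else 0 with hk'
    have hkne : k ≠ k' := by
      simp only [hk']
      split_ifs with h
      · subst h; decide
      · exact h
    have hkk' : w k ≠ w k' := fun h => hkne (hwinj h)
    have h1 := hindep _ (hwM k) _ (hwM k') hkk'
    have h2 := (hadj _ (hwM k')).2
    have h3 := hru _ (hwM k)
    rw [hEq, dist_comm] at h1
    linarith
  set z : Fin 6 → ℂ := fun k => q (w k) - q v with hz
  have hzne : ∀ k, z k ≠ 0 := by
    intro k h
    apply hne k
    have : q (w k) = q v := by rwa [sub_eq_zero] at h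
    exact li.injective this
  set θ : Fin 6 → ℝ := fun k => (z k).arg with hθ
  obtain ⟨i, j, hij, hcos⟩ := six_angles θ
    (fun k => ⟨Complex.neg_pi_lt_arg _, Complex.arg_le_pi _⟩)
  set R : ℝ := r (w i) + r (w j) with hR
  have hzi : ‖z i‖ ≤ R := by
    have h1 := (hadj _ (hwM i)).2
    have h2 := hru _ (hwM j)
    have : ‖z i‖ = dist (p (w i)) (p v) := by
      rw [← hdist]; simp [hz, Complex.dist_eq]
    rw [this]; linarith
  have hzj : ‖z j‖ ≤ R := by
    have h1 := (hadj _ (hwM j)).2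
    have h2 := hru _ (hwM i)
    have : ‖z j‖ = dist (p (w j)) (p v) := by
      rw [← hdist]; simp [hz, Complex.dist_eq]
    rw [this]; linarith
  have hclose := close_dirs (hzne i) (hzne j) hcos hzi hzj
  have hdd : ‖z i - z j‖ = dist (p (w i)) (p (w j)) := by
    rw [← hdist]
    simp only [hz, Complex.dist_eq]
    congr 1; ring
  rw [hdd] at hclose
  have := hindep _ (hwM i) _ (hwM j) (fun h => hij (hwinj h))
  linarith
end

section
/- Let p, q₁, q₂ ∈ ℝ² and r, r₁, r₂ > 0 with r₁ ≥ r and r₂ ≥ r. If dist(p,q₁) ≤ r + r₁, dist(p,q₂) ≤ r + r₂, and the angle ∠ q₁ p q₂ is at most π/3 (60 degrees), then dist(q₁,q₂) ≤ r₁ + r₂; that is, two disks of radius at least r whose centers subtend an angle of at most 60° at p and which both intersect the disk of radius r around p must intersect each other. -/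
/-- two disks of radius at least `r` whose centers subtend an
angle of at most 60° at `p` and which both intersect the disk of radius `r`
around `p` must intersect each other. -/
theorem disks_at_small_angle_intersect
    (p q₁ q₂ : EuclideanSpace ℝ (Fin 2)) (r r₁ r₂ : ℝ)
    (hr : 0 < r) (hr₁ : r ≤ r₁) (hr₂ : r ≤ r₂)
    (h1 : dist p q₁ ≤ r + r₁) (h2 : dist p q₂ ≤ r + r₂)
    (hangle : EuclideanGeometry.angle q₁ p q₂ ≤ Real.pi / 3) :
    dist q₁ q₂ ≤ r₁ + r₂ := by
  have hlaw := EuclideanGeometry.law_cos q₁ p q₂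
  have hcos : Real.cos (EuclideanGeometry.angle q₁ p q₂) ≥ 1 / 2 := by
    have h0 : (0:ℝ) ≤ EuclideanGeometry.angle q₁ p q₂ := EuclideanGeometry.angle_nonneg _ _ _
    have := Real.cos_le_cos_of_nonneg_of_le_pi h0 (by linarith [Real.pi_pos]) hangle
    rwa [Real.cos_pi_div_three] at this
  have ha : (0:ℝ) ≤ dist q₁ p := dist_nonneg
  have hb : (0:ℝ) ≤ dist q₂ p := dist_nonneg
  have h1' : dist q₁ p ≤ r + r₁ := by rwa [dist_comm]
  have h2' : dist q₂ p ≤ r + r₂ := by rwa [dist_comm]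
  have hd : (0:ℝ) ≤ dist q₁ q₂ := dist_nonneg
  nlinarith [sq_nonneg (dist q₁ p - dist q₂ p), sq_nonneg (dist q₁ q₂ - (r₁ + r₂)),
    mul_nonneg ha hb, sq_nonneg (dist q₁ p - dist q₂ p - r₁ + r₂),
    mul_nonneg (mul_nonneg ha hb) hd]
end

section
/- Let r > 0, a > 0, and let D be a closed disk of radius a·r in ℝ². Then the number of closed disks of radius at least r that each intersect D but pairwise do not intersect each other is at most (a+2)². Precisely: if c₀ is the center of D and c_1,...,c_m are centers of disks with radii ρ_1,...,ρ_m ≥ r such that dist(c_i,c₀) ≤ a·r + ρ_i for all i and dist(c_i,c_j) > ρ_i + ρ_j for all i ≠ j, then m ≤ (a+2)². -/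
/-- the number of pairwise disjoint closed disks of radius at
least `r` that all intersect a given closed disk of radius `a·r` is at most
`(a+2)²`. -/
theorem disjoint_disks_touching_disk_card_le {m : ℕ} (r a : ℝ)
    (hr : 0 < r) (ha : 0 < a)
    (c₀ : EuclideanSpace ℝ (Fin 2)) (c : Fin m → EuclideanSpace ℝ (Fin 2))
    (ρ : Fin m → ℝ) (hρ : ∀ i, r ≤ ρ i)
    (hint : ∀ i, dist (c i) c₀ ≤ a * r + ρ i)
    (hdisj : ∀ i j, i ≠ j → ρ i + ρ j < dist (c i) (c j)) :
    (m : ℝ) ≤ (a + 2) ^ 2 := by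
  classical
  set d : Fin m → ℝ := fun i => dist (c i) c₀ with hd
  set t : Fin m → ℝ := fun i => max 0 (d i - ρ i + r) with ht
  have ht0 : ∀ i, 0 ≤ t i := fun i => le_max_left _ _
  have htd : ∀ i, t i ≤ d i := by
    intro i
    apply max_le dist_nonneg
    have := hρ i; simp only [d]; linarith
  have htR : ∀ i, t i ≤ (a + 1) * r := by
    intro i
    apply max_le (by positivity)
    have := hint i; simp only [d]; linarith
  set q : Fin m → EuclideanSpace ℝ (Fin 2) := fun i => c₀ + (t i / d i) • (c i - c₀) with hq
  have hd0 : ∀ i, d i = 0 → t i = 0 := by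
    intro i hdi
    have := hρ i
    simp only [t, hdi]
    rw [max_eq_left]; linarith
  have hqc₀ : ∀ i, dist (q i) c₀ = t i := by
    intro i
    rcases eq_or_ne (d i) 0 with h0 | h0
    · rw [hd0 i h0]
      simp [q, h0, hd0 i h0]
    · have hdpos : 0 < d i := lt_of_le_of_ne dist_nonneg (Ne.symm h0)
      have : q i - c₀ = (t i / d i) • (c i - c₀) := by simp [q]
      rw [dist_eq_norm, this, norm_smul, Real.norm_eq_abs,
        abs_of_nonneg (div_nonneg (ht0 i) hdpos.le)]
      have hnorm : ‖c i - c₀‖ = d i := (dist_eq_norm (c i) c₀).symm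
      rw [hnorm, div_mul_cancel₀ _ h0]
  have hqc : ∀ i, dist (q i) (c i) = d i - t i := by
    intro i
    rcases eq_or_ne (d i) 0 with h0 | h0
    · have hc : c i = c₀ := by rw [← dist_eq_zero]; exact h0
      rw [hd0 i h0, h0]
      simp [q, hc, h0, hd0 i h0]
    · have hdpos : 0 < d i := lt_of_le_of_ne dist_nonneg (Ne.symm h0)
      have : q i - c i = (t i / d i - 1) • (c i - c₀) := by
        simp only [q, sub_smul, one_smul]
        abel
      rw [dist_eq_norm, this, norm_smul, Real.norm_eq_abs]
      have h1 : t i / d i - 1 ≤ 0 := by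
        rw [sub_nonpos, div_le_one hdpos]; exact htd i
      rw [abs_of_nonpos h1]
      have hnorm : ‖c i - c₀‖ = d i := (dist_eq_norm (c i) c₀).symm
      rw [hnorm]
      field_simp
      ring
  -- the shrunk balls are pairwise disjoint
  have hsep : ∀ i j, i ≠ j → 2 * r ≤ dist (q i) (q j) := by
    intro i j hij
    have h1 : dist (c i) (c j) ≤ dist (c i) (q i) + dist (q i) (q j) + dist (q j) (c j) :=
      dist_triangle4 _ _ _ _
    have h2 : dist (c i) (q i) = d i - t i := by rw [dist_comm]; exact hqc i
    have h3 : dist (q j) (c j) = d j - t j := hqc j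
    have h4 : d i - t i ≤ ρ i - r := by
      have : d i - ρ i + r ≤ t i := le_max_right _ _
      linarith
    have h5 : d j - t j ≤ ρ j - r := by
      have : d j - ρ j + r ≤ t j := le_max_right _ _
      linarith
    have h6 := hdisj i j hij
    linarith
  have hdisjB : Pairwise (Function.onFun Disjoint fun i => Metric.ball (q i) r) := by
    intro i j hij
    apply Metric.ball_disjoint_ball
    rw [← two_mul]
    exact hsep i j hij
  -- all shrunk balls are inside the big ball
  have hsub : ∀ i, Metric.ball (q i) r ⊆ Metric.ball c₀ ((a + 2) * r) := by
    intro i x hx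
    rw [Metric.mem_ball] at hx ⊢
    have := dist_triangle x (q i) c₀
    have h2 := hqc₀ i
    have h3 := htR i
    nlinarith
  -- volume comparison
  have hvol1 : (MeasureTheory.volume (⋃ i, Metric.ball (q i) r)) =
      ∑' i, MeasureTheory.volume (Metric.ball (q i) r) :=
    MeasureTheory.measure_iUnion hdisjB fun i => Metric.isOpen_ball.measurableSet
  have hfr : Module.finrank ℝ (EuclideanSpace ℝ (Fin 2)) = 2 := finrank_euclideanSpace_fin
  set V := MeasureTheory.volume (Metric.ball (0 : EuclideanSpace ℝ (Fin 2)) 1) with hV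
  have hball : ∀ (x : EuclideanSpace ℝ (Fin 2)) (s : ℝ), 0 ≤ s →
      MeasureTheory.volume (Metric.ball x s) = ENNReal.ofReal (s ^ 2) * V := by
    intro x s hs
    rw [MeasureTheory.Measure.addHaar_ball _ x hs, hfr]
  have hVpos : 0 < V := Metric.measure_ball_pos _ _ one_pos
  have hVlt : V ≠ ⊤ := MeasureTheory.measure_ball_lt_top.ne
  have hsum : ∑' i, MeasureTheory.volume (Metric.ball (q i) r)
      = (m : ENNReal) * (ENNReal.ofReal (r ^ 2) * V) := by
    rw [tsum_fintype]
    simp only [fun i => hball (q i) r hr.le]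
    rw [Finset.sum_const, Finset.card_univ, Fintype.card_fin, nsmul_eq_mul]
  have hle : (m : ENNReal) * (ENNReal.ofReal (r ^ 2) * V)
      ≤ ENNReal.ofReal (((a + 2) * r) ^ 2) * V := by
    rw [← hsum, ← hvol1, ← hball c₀ ((a + 2) * r) (by positivity)]
    exact MeasureTheory.measure_mono (Set.iUnion_subset hsub)
  have hle2 : (m : ENNReal) * ENNReal.ofReal (r ^ 2)
      ≤ ENNReal.ofReal (((a + 2) * r) ^ 2) := by
    rw [show (m : ENNReal) * (ENNReal.ofReal (r ^ 2) * V) = (m : ENNReal) * ENNReal.ofReal (r ^ 2) * V from (mul_assoc _ _ _).symm] at hle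
    exact (ENNReal.mul_le_mul_iff_left hVpos.ne' hVlt).mp hle
  have hle3 : (m : ℝ) * r ^ 2 ≤ ((a + 2) * r) ^ 2 := by
    have : ENNReal.ofReal ((m : ℝ) * r ^ 2) ≤ ENNReal.ofReal (((a + 2) * r) ^ 2) := by
      rw [ENNReal.ofReal_mul (by positivity), ENNReal.ofReal_natCast]
      exact hle2
    exact (ENNReal.ofReal_le_ofReal_iff (by positivity)).mp this
  have hr2 : 0 < r ^ 2 := by positivity
  nlinarith
end

section
/- For distance-2 coloring in (r,s)-civilized graphs, the associated conflict graph has inductive independence number at most (4r/s + 2)², with respect to any ordering of the vertices. Precisely: let G be an (r,s)-civilized graph, let v be a vertex, and let M be a set of vertices such that every u ∈ M is in conflict with v and no two distinct vertices of M are in conflict with each other. Then |M| ≤ (4r/s + 2)². -/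
open Finset

/-- Conflict for distance-2 coloring in a graph `G`: graph distance at most 2,
i.e. the two distinct vertices are adjacent or have a common neighbor. -/
def GraphConflict {n : ℕ} (G : SimpleGraph (Fin n)) (u v : Fin n) : Prop :=
  u ≠ v ∧ (G.Adj u v ∨ ∃ z, G.Adj u z ∧ G.Adj z v)

/-- for distance-2 coloring in `(r,s)`-civilized graphs the
associated conflict graph has inductive independence number at most
`(4r/s + 2)²` (with respect to any ordering of the vertices). -/
theorem civilized_distance2_inductive_independence {n : ℕ} (r s : ℝ)
    (hs : 0 < s) (hsr : s ≤ r)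
    (G : SimpleGraph (Fin n)) (p : Fin n → EuclideanSpace ℝ (Fin 2))
    (hedge : ∀ u v, G.Adj u v → dist (p u) (p v) ≤ r)
    (hsep : ∀ u v : Fin n, u ≠ v → s ≤ dist (p u) (p v))
    (v : Fin n) (M : Finset (Fin n))
    (hconf : ∀ u ∈ M, GraphConflict G u v)
    (hnc : ∀ u ∈ M, ∀ u' ∈ M, u ≠ u' → ¬ GraphConflict G u u') :
    (M.card : ℝ) ≤ (4 * r / s + 2) ^ 2 := by
  classical
  have hr : 0 < r := lt_of_lt_of_le hs hsr
  -- every u ∈ M is within distance 2r of v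
  have hdist : ∀ u ∈ M, dist (p u) (p v) ≤ 2 * r := by
    intro u hu
    obtain ⟨hne, hadj | ⟨z, hz1, hz2⟩⟩ := hconf u hu
    · linarith [hedge u v hadj]
    · calc dist (p u) (p v) ≤ dist (p u) (p z) + dist (p z) (p v) := dist_triangle _ _ _
        _ ≤ 2 * r := by linarith [hedge u z hz1, hedge z v hz2]
  have hfr : Module.finrank ℝ (EuclideanSpace ℝ (Fin 2)) = 2 := finrank_euclideanSpace_fin
  set μ : MeasureTheory.Measure (EuclideanSpace ℝ (Fin 2)) := MeasureTheory.volume with hμ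
  set c : ENNReal := μ (Metric.ball (0 : EuclideanSpace ℝ (Fin 2)) 1) with hc
  have hc0 : c ≠ 0 := (Metric.measure_ball_pos μ 0 one_pos).ne'
  have hctop : c ≠ ⊤ := MeasureTheory.measure_ball_lt_top.ne
  have hs2 : (0:ℝ) ≤ s / 2 := by linarith
  have hR : (0:ℝ) ≤ 2 * r + s / 2 := by linarith
  -- disjoint balls
  have hdisj : (M : Set (Fin n)).PairwiseDisjoint (fun u => Metric.ball (p u) (s / 2)) := by
    intro u hu u' hu' huu'
    exact Metric.ball_disjoint_ball (by linarith [hsep u u' huu'])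
  have hsum : ∑ u ∈ M, μ (Metric.ball (p u) (s / 2))
      = μ (⋃ u ∈ M, Metric.ball (p u) (s / 2)) :=
    (MeasureTheory.measure_biUnion_finset hdisj
      (fun u _ => Metric.isOpen_ball.measurableSet)).symm
  have hsub : (⋃ u ∈ M, Metric.ball (p u) (s / 2)) ⊆ Metric.ball (p v) (2 * r + s / 2) := by
    intro x hx
    simp only [Set.mem_iUnion] at hx
    obtain ⟨u, hu, hxu⟩ := hx
    have := hdist u hu
    calc dist x (p v) ≤ dist x (p u) + dist (p u) (p v) := dist_triangle _ _ _
      _ < 2 * r + s / 2 := by rw [Metric.mem_ball] at hxu; linarith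
  have hball : ∀ x : EuclideanSpace ℝ (Fin 2), ∀ t : ℝ, 0 ≤ t →
      μ (Metric.ball x t) = ENNReal.ofReal (t ^ 2) * c := by
    intro x t ht
    rw [MeasureTheory.Measure.addHaar_ball μ x ht, hfr]
  have key : (M.card : ENNReal) * (ENNReal.ofReal ((s / 2) ^ 2) * c)
      ≤ ENNReal.ofReal ((2 * r + s / 2) ^ 2) * c := by
    calc (M.card : ENNReal) * (ENNReal.ofReal ((s / 2) ^ 2) * c)
        = ∑ u ∈ M, μ (Metric.ball (p u) (s / 2)) := by
          rw [Finset.sum_congr rfl (fun u _ => hball (p u) (s/2) hs2), Finset.sum_const,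
            nsmul_eq_mul]
      _ = μ (⋃ u ∈ M, Metric.ball (p u) (s / 2)) := hsum
      _ ≤ μ (Metric.ball (p v) (2 * r + s / 2)) := MeasureTheory.measure_mono hsub
      _ = ENNReal.ofReal ((2 * r + s / 2) ^ 2) * c := hball _ _ hR
  have key2 : (M.card : ENNReal) * ENNReal.ofReal ((s / 2) ^ 2)
      ≤ ENNReal.ofReal ((2 * r + s / 2) ^ 2) := by
    rw [← ENNReal.mul_le_mul_iff_left hc0 hctop, mul_assoc]
    exact key
  have key3 : (M.card : ℝ) * (s / 2) ^ 2 ≤ (2 * r + s / 2) ^ 2 := by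
    have : ENNReal.ofReal ((M.card : ℝ) * (s / 2) ^ 2)
        ≤ ENNReal.ofReal ((2 * r + s / 2) ^ 2) := by
      rw [ENNReal.ofReal_mul (by positivity), ENNReal.ofReal_natCast]
      exact key2
    exact (ENNReal.ofReal_le_ofReal_iff (by positivity)).mp this
  have hs2' : (0:ℝ) < s ^ 2 := by positivity
  rw [div_add' _ _ _ hs.ne', div_pow, le_div_iff₀ hs2']
  nlinarith [key3, sq_nonneg s, sq_nonneg r]
end

section
/- The interference constraints of the physical (SINR) model with fixed transmission powers can be represented exactly by an edge-weighted conflict graph: there exists ε > 0 such that, defining edge weights w(ℓ',ℓ) = min{ 1, (β/(1+ε))·(p_{ℓ'}/d(s_{ℓ'},r_ℓ)^α) / ( p_ℓ/d(s_ℓ,r_ℓ)^α − (β/(1+ε))·ν ) } for ℓ' ≠ ℓ and w(ℓ,ℓ) = 0, the following holds for every subset M of the links: M is SINR-feasible if and only if for every ℓ ∈ M, ∑_{ℓ' ∈ M, ℓ' ≠ ℓ} w(ℓ',ℓ) < 1 (i.e. M is an independent set of the edge-weighted conflict graph). -/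
open Finset

/-- the SINR constraints of the physical model with fixed
transmission powers can be represented exactly by an edge-weighted conflict
graph: there is an `ε > 0` such that a set `M` of links is SINR-feasible iff
it is an independent set of the conflict graph with weights
`w(ℓ',ℓ) = min{1, (β/(1+ε))·(p ℓ' / d(s ℓ', r ℓ)^α) /
(p ℓ / d(s ℓ, r ℓ)^α − (β/(1+ε))·ν)}`. -/
theorem physical_model_conflict_graph_representation
    {X : Type*} [MetricSpace X] {m : ℕ}
    (s r : Fin m → X) (p : Fin m → ℝ) (α β ν : ℝ)
    (hα : 0 < α) (hβ : 0 < β) (hν : 0 ≤ ν)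
    (hd : ∀ ℓ, 0 < dist (s ℓ) (r ℓ))
    (hd' : ∀ ℓ ℓ' : Fin m, ℓ ≠ ℓ' → 0 < dist (s ℓ') (r ℓ))
    (hp : ∀ ℓ, 0 < p ℓ)
    (hnoise : ∀ ℓ, β * ν < p ℓ / dist (s ℓ) (r ℓ) ^ α) :
    ∃ ε : ℝ, 0 < ε ∧
      ∀ M : Finset (Fin m),
        (∀ ℓ ∈ M,
            β * ((∑ ℓ' ∈ M.erase ℓ, p ℓ' / dist (s ℓ') (r ℓ) ^ α) + ν)
              ≤ p ℓ / dist (s ℓ) (r ℓ) ^ α)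
        ↔ (∀ ℓ ∈ M,
            ∑ ℓ' ∈ M.erase ℓ,
              min 1 ((β / (1 + ε)) * (p ℓ' / dist (s ℓ') (r ℓ) ^ α)
                / (p ℓ / dist (s ℓ) (r ℓ) ^ α - (β / (1 + ε)) * ν)) < 1) := by
  classical
  set S : Fin m → ℝ := fun ℓ => p ℓ / dist (s ℓ) (r ℓ) ^ α with hSdef
  have hSpos : ∀ ℓ, 0 < S ℓ := fun ℓ =>
    div_pos (hp ℓ) (Real.rpow_pos_of_pos (hd ℓ) α)
  set I : Fin m → Fin m → ℝ := fun ℓ' ℓ => p ℓ' / dist (s ℓ') (r ℓ) ^ α with hIdef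
  have hInn : ∀ ℓ' ℓ, 0 ≤ I ℓ' ℓ := fun ℓ' ℓ =>
    div_nonneg (hp ℓ').le (by positivity)
  set T : Finset (Fin m) × Fin m → ℝ :=
    fun q => β * ((∑ ℓ' ∈ q.1.erase q.2, I ℓ' q.2) + ν) / S q.2 with hTdef
  set Bad : Finset (Finset (Fin m) × Fin m) :=
    Finset.univ.filter (fun q => 1 < T q) with hBad
  set ε : ℝ := if h : Bad.Nonempty then min 1 (Bad.inf' h (fun q => T q - 1)) else 1
    with hεdef
  have hεpos : 0 < ε := by
    rw [hεdef]
    split_ifs with h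
    · apply lt_min one_pos
      rw [Finset.lt_inf'_iff]
      intro q hq
      have : 1 < T q := by
        have := Finset.mem_filter.mp hq
        exact this.2
      linarith
    · exact one_pos
  have hεle : ∀ q ∈ Bad, ε ≤ T q - 1 := by
    intro q hq
    have hne : Bad.Nonempty := ⟨q, hq⟩
    rw [hεdef]
    rw [dif_pos hne]
    exact le_trans (min_le_right _ _) (Finset.inf'_le _ hq)
  have h1ε : (0:ℝ) < 1 + ε := by linarith
  -- key: feasibility with slack
  have hkey : ∀ (M : Finset (Fin m)) (ℓ : Fin m),
      (β * ((∑ ℓ' ∈ M.erase ℓ, I ℓ' ℓ) + ν) ≤ S ℓ ↔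
        β * ((∑ ℓ' ∈ M.erase ℓ, I ℓ' ℓ) + ν) < (1 + ε) * S ℓ) := by
    intro M ℓ
    constructor
    · intro h
      have : S ℓ < (1 + ε) * S ℓ := by nlinarith [hSpos ℓ]
      linarith
    · intro h
      by_contra hc
      push_neg at hc
      have hq : (M, ℓ) ∈ Bad := by
        rw [hBad, Finset.mem_filter]
        refine ⟨Finset.mem_univ _, ?_⟩
        rw [hTdef]
        simp only
        rw [lt_div_iff₀ (hSpos ℓ)]
        linarith
      have h2 := hεle _ hq
      rw [hTdef] at h2
      simp only at h2
      have h3 : (ε + 1) * S ℓ ≤ β * ((∑ ℓ' ∈ M.erase ℓ, I ℓ' ℓ) + ν) := by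
        rw [← le_div_iff₀ (hSpos ℓ)]
        linarith
      linarith
  refine ⟨ε, hεpos, ?_⟩
  intro M
  set B : ℝ := β / (1 + ε) with hBdef
  have hBpos : 0 < B := div_pos hβ h1ε
  have hBβ : B ≤ β := by
    rw [hBdef, div_le_iff₀ h1ε]
    nlinarith
  have hD : ∀ ℓ, 0 < S ℓ - B * ν := by
    intro ℓ
    have h1 : B * ν ≤ β * ν := mul_le_mul_of_nonneg_right hBβ hν
    have := hnoise ℓ
    rw [hSdef]; simp only
    linarith
  -- per-link equivalence for the conflict-graph sum
  have hconf : ∀ ℓ : Fin m,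
      ((∑ ℓ' ∈ M.erase ℓ, min 1 (B * I ℓ' ℓ / (S ℓ - B * ν))) < 1 ↔
       β * ((∑ ℓ' ∈ M.erase ℓ, I ℓ' ℓ) + ν) < (1 + ε) * S ℓ) := by
    intro ℓ
    have htermnn : ∀ ℓ' ∈ M.erase ℓ, 0 ≤ B * I ℓ' ℓ / (S ℓ - B * ν) := by
      intro ℓ' _
      exact div_nonneg (mul_nonneg hBpos.le (hInn ℓ' ℓ)) (hD ℓ).le
    have hminnn : ∀ ℓ' ∈ M.erase ℓ, 0 ≤ min 1 (B * I ℓ' ℓ / (S ℓ - B * ν)) := by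
      intro ℓ' h
      exact le_min zero_le_one (htermnn ℓ' h)
    have hstep : (∑ ℓ' ∈ M.erase ℓ, min 1 (B * I ℓ' ℓ / (S ℓ - B * ν))) < 1 ↔
        (∑ ℓ' ∈ M.erase ℓ, B * I ℓ' ℓ / (S ℓ - B * ν)) < 1 := by
      constructor
      · intro h
        have heq : ∀ ℓ' ∈ M.erase ℓ,
            min 1 (B * I ℓ' ℓ / (S ℓ - B * ν)) = B * I ℓ' ℓ / (S ℓ - B * ν) := by
          intro ℓ' hℓ'
          have hle : min 1 (B * I ℓ' ℓ / (S ℓ - B * ν)) ≤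
              ∑ ℓ'' ∈ M.erase ℓ, min 1 (B * I ℓ'' ℓ / (S ℓ - B * ν)) :=
            Finset.single_le_sum hminnn hℓ'
          have hlt : min 1 (B * I ℓ' ℓ / (S ℓ - B * ν)) < 1 := lt_of_le_of_lt hle h
          rcases lt_or_ge (B * I ℓ' ℓ / (S ℓ - B * ν)) 1 with h1 | h1
          · exact min_eq_right h1.le
          · rw [min_eq_left h1] at hlt; exact absurd hlt (lt_irrefl 1)
        rw [← Finset.sum_congr rfl heq]
        exact h
      · intro h
        calc (∑ ℓ' ∈ M.erase ℓ, min 1 (B * I ℓ' ℓ / (S ℓ - B * ν)))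
            ≤ ∑ ℓ' ∈ M.erase ℓ, B * I ℓ' ℓ / (S ℓ - B * ν) :=
              Finset.sum_le_sum (fun ℓ' _ => min_le_right _ _)
          _ < 1 := h
    rw [hstep]
    have hsum : (∑ ℓ' ∈ M.erase ℓ, B * I ℓ' ℓ / (S ℓ - B * ν)) =
        B * (∑ ℓ' ∈ M.erase ℓ, I ℓ' ℓ) / (S ℓ - B * ν) := by
      rw [← Finset.sum_div, ← Finset.mul_sum]
    rw [hsum, div_lt_one (hD ℓ)]
    have hBε : B * (1 + ε) = β := by
      rw [hBdef]
      field_simp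
    set Sig : ℝ := ∑ ℓ' ∈ M.erase ℓ, I ℓ' ℓ with hSig
    constructor
    · intro h
      have h2 : B * (Sig + ν) < S ℓ := by nlinarith
      calc β * (Sig + ν) = (1 + ε) * (B * (Sig + ν)) := by rw [← hBε]; ring
        _ < (1 + ε) * S ℓ := by exact mul_lt_mul_of_pos_left h2 h1ε
    · intro h
      have h2 : (1 + ε) * (B * (Sig + ν)) < (1 + ε) * S ℓ := by
        calc (1 + ε) * (B * (Sig + ν)) = β * (Sig + ν) := by rw [← hBε]; ring
          _ < (1 + ε) * S ℓ := h
      have h3 : B * (Sig + ν) < S ℓ := lt_of_mul_lt_mul_left h2 h1ε.le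
      nlinarith
  constructor
  · intro h ℓ hℓ
    rw [hconf ℓ]
    exact (hkey M ℓ).mp (h ℓ hℓ)
  · intro h ℓ hℓ
    exact (hkey M ℓ).mpr ((hconf ℓ).mp (h ℓ hℓ))
end
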